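/- arXiv:1307.4471 — 2 statements merged into one kernel-verified Lean document; each statement's English description precedes it below -/
import Mathlib

section
/- The profile tree T is accepting (has an infinite branch containing infinitely many F-classes) if and only if there exists a label m that is successful on infinitely many levels. -/
/-!
Profile trees for Büchi determinization (Fisman–Kupferman–Vardi–Wilke style profiles).
Common definitions: nondeterministic Büchi word automata (NBW), the run DAG `G`,
profiles of nodes, and the pruned run DAG `G'`.
-/

/-- A nondeterministic Büchi word automaton `A = (Alph, Q, Qin, ρ, F)` with `Qin ∩ F = ∅`. -/
structure NBW (Alph Q : Type*) where
  Qin : Set Q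
  ρ : Q → Alph → Set Q
  F : Set Q
  disj : Qin ∩ F = ∅

variable {Alph Q : Type*} (A : NBW Alph Q) (w : ℕ → Alph)

/-- Lexicographic order `L₁ ≤ L₂` on profiles (lists over ℕ). -/
def lexLE (L₁ L₂ : List ℕ) : Prop :=
  List.Lex (· < ·) L₁ L₂ ∨ L₁ = L₂

/-- Strict lexicographic order `L₁ < L₂` on profiles. -/
def lexLT (L₁ L₂ : List ℕ) : Prop :=
  List.Lex (· < ·) L₁ L₂

open Classical in
/-- The profiles of all finite initial runs of `A` (on `w`) to the node `v = (q, i)`: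
for each run `p₀,…,p_i` with `p₀ ∈ Qin`, `p_{j+1} ∈ ρ(p_j, w_j)` and `p_i = q`, the
sequence of `F`-visitation labels `f(p₀,0) ⋯ f(p_i,i)` (where `f` is 1 on `F`-nodes, else 0). -/
def runProfiles (v : Q × ℕ) : Set (List ℕ) :=
  { L | ∃ p : ℕ → Q, p 0 ∈ A.Qin ∧ (∀ j < v.2, p (j + 1) ∈ A.ρ (p j) (w j)) ∧
        p v.2 = v.1 ∧ L = (List.range (v.2 + 1)).map (fun j => if p j ∈ A.F then 1 else 0) }

/-- `v` is a node of the run DAG `G = (V, E)` (equivalently of the pruned DAG `G'`):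
there is a finite run of `A` to `v.1` on `w₀ ⋯ w_{v.2 - 1}`. -/
def memV (v : Q × ℕ) : Prop := (runProfiles A w v).Nonempty

/-- `L` is the lexicographically maximal profile among all initial paths to `v`. -/
def IsMaxProfile (v : Q × ℕ) (L : List ℕ) : Prop :=
  L ∈ runProfiles A w v ∧ ∀ L' ∈ runProfiles A w v, lexLE L' L

open Classical in
/-- The profile `h_v` of a node `v`: the lexicographically maximal profile of an
initial path to `v` (junk value `[]` if `v` is not a node of the DAG). -/
noncomputable def profile (v : Q × ℕ) : List ℕ :=
  if h : ∃ L, IsMaxProfile A w v L then h.choose else []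

/-- The edge relation `E` of the run DAG `G`: `E((q,i), (q',i+1))` iff `(q,i) ∈ V`
and `q' ∈ ρ(q, w_i)`. -/
def edgeG (u v : Q × ℕ) : Prop :=
  memV A w u ∧ v.2 = u.2 + 1 ∧ v.1 ∈ A.ρ u.1 (w u.2)

/-- The edge relation `E'` of the pruned run DAG `G'`: `(u,v) ∈ E` and every
`E`-parent `u'` of `v` satisfies `h_{u'} ≤ h_u`. -/
def edgeG' (u v : Q × ℕ) : Prop :=
  edgeG A w u v ∧ ∀ u', edgeG A w u' v → lexLE (profile A w u') (profile A w u)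

/-- The equivalence class (under equality of profiles, levelwise) of a node `u` of `G'`. -/
def classOf (u : Q × ℕ) : Set (Q × ℕ) :=
  { v | memV A w v ∧ v.2 = u.2 ∧ profile A w v = profile A w u }

/-- `C` is a class (node) of the profile tree `T` on level `i`. -/
def ClassAt (C : Set (Q × ℕ)) (i : ℕ) : Prop :=
  ∃ u, memV A w u ∧ u.2 = i ∧ C = classOf A w u

/-- The child relation of the profile tree `T`: `[v]` is a child of `[u]`
whenever `(u, v) ∈ E'`. -/
def childC (C D : Set (Q × ℕ)) : Prop :=
  ∃ u v, edgeG' A w u v ∧ memV A w v ∧ C = classOf A w u ∧ D = classOf A w v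

/-- `D` is a descendant of `C` in `T`: there is a (possibly empty) path from `C` to `D`. -/
def DescC : Set (Q × ℕ) → Set (Q × ℕ) → Prop := Relation.ReflTransGen (childC A w)

/-- `C` is an `F`-class: all its members are `F`-nodes. -/
def IsFClass (C : Set (Q × ℕ)) : Prop := ∀ v ∈ C, v.1 ∈ A.F

/-- `h_C ≤ h_D` for classes `C`, `D` (members of a class all share one profile). -/
def profLE (C D : Set (Q × ℕ)) : Prop :=
  ∀ u ∈ C, ∀ v ∈ D, lexLE (profile A w u) (profile A w v)

/-- `h_C < h_D` for classes `C`, `D`. -/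
def profLT (C D : Set (Q × ℕ)) : Prop :=
  ∀ u ∈ C, ∀ v ∈ D, lexLT (profile A w u) (profile A w v)

/-- An infinite branch of `T`: a class on each level, consecutive ones related by the
child relation. -/
def IsBranch (b : ℕ → Set (Q × ℕ)) : Prop :=
  (∀ i, ClassAt A w (b i) i) ∧ ∀ i, childC A w (b i) (b (i + 1))

/-- The profile tree `T` is accepting: it has an infinite branch containing
infinitely many `F`-classes. -/
def TreeAccepting : Prop :=
  ∃ b : ℕ → Set (Q × ℕ), IsBranch A w b ∧ ∀ n, ∃ i ≥ n, IsFClass A (b i)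

/-- `C` (a class on level `i`) is before `D` (a class on level `j`):
`i < j`, or `i = j` and `h_C < h_D`. -/
def BeforeC (C : Set (Q × ℕ)) (i : ℕ) (D : Set (Q × ℕ)) (j : ℕ) : Prop :=
  i < j ∨ (i = j ∧ profLT A w C D)

/-- `C` (on level `i`) is `first(m)` for the labeling `gl`: the first class
(in the `before` order) labeled `m`. -/
def IsFirst (gl : Set (Q × ℕ) → ℕ) (m : ℕ) (C : Set (Q × ℕ)) (i : ℕ) : Prop :=
  ClassAt A w C i ∧ gl C = m ∧
    ∀ D j, ClassAt A w D j → gl D = m → ¬ BeforeC A w D j C i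

/-- `C` is a descendant of `first(m)` (for the labeling `gl`). -/
def DescFirst (gl : Set (Q × ℕ) → ℕ) (m : ℕ) (C : Set (Q × ℕ)) : Prop :=
  ∃ Fm j, IsFirst A w gl m Fm j ∧ DescC A w Fm C

/-- `C = lmd(m, i)` for the labeling `gl`: `C` is the class of lexicographically
minimal profile among the descendants of `first(m)` on level `i`. -/
def IsLmd (gl : Set (Q × ℕ) → ℕ) (m i : ℕ) (C : Set (Q × ℕ)) : Prop :=
  ClassAt A w C i ∧ DescFirst A w gl m C ∧
    ∀ D, ClassAt A w D i → DescFirst A w gl m D → profLE A w C D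

/-- `gl` is the global labeling of the profile tree `T`:
`gl(U₀) = 0` for the level-0 class; for every class `U` on level `i`,
if `labels(U) = {m ∣ U = lmd(m,i)}` is nonempty then `gl(U) = min(labels(U))`,
and otherwise `gl(U) = 1 + max{gl(W) ∣ W before U}`. -/
def GlSpec (gl : Set (Q × ℕ) → ℕ) : Prop :=
  (∀ C, ClassAt A w C 0 → gl C = 0) ∧
  ∀ C i, ClassAt A w C i →
    ((∃ m, IsLmd A w gl m i C) →
        IsLmd A w gl (gl C) i C ∧ ∀ m, IsLmd A w gl m i C → gl C ≤ m) ∧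
    ((¬ ∃ m, IsLmd A w gl m i C) →
        (∃ D j, ClassAt A w D j ∧ BeforeC A w D j C i ∧ gl C = gl D + 1) ∧
        ∀ D j, ClassAt A w D j → BeforeC A w D j C i → gl D < gl C)

/-- The label `m` is successful on level `i`: there are classes `U` on level `i-1`
and `U'` on level `i` with `gl(U) = gl(U') = m` such that either `U'` is the
`F`-child of `U`, or `U'` is not a child of `U` at all. -/
def SuccessfulAt (gl : Set (Q × ℕ) → ℕ) (m i : ℕ) : Prop :=
  0 < i ∧ ∃ U U', ClassAt A w U (i - 1) ∧ ClassAt A w U' i ∧ gl U = m ∧ gl U' = m ∧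
    ((childC A w U U' ∧ IsFClass A U') ∨ ¬ childC A w U U')

namespace PT

set_option linter.unusedSectionVars false

variable [Fintype Q]

theorem lexLT_iff (L M : List ℕ) : lexLT L M ↔ L < M := Iff.rfl

theorem lexLE_iff (L M : List ℕ) : lexLE L M ↔ L ≤ M := by
  rw [le_iff_lt_or_eq]; exact Iff.rfl

theorem lex_append_strict : ∀ {L M : List ℕ}, L.length = M.length →
    L < M → ∀ (a b : ℕ), L ++ [a] < M ++ [b] := by
  intro L M hlen h
  induction h with
  | nil => intro a b; simp at hlen
  | @rel x l y m hr => intro a b; exact List.Lex.rel hr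
  | @cons x l m h ih =>
      intro a b
      exact List.Lex.cons (ih (by simpa using hlen) a b)

theorem lex_append_last {L : List ℕ} : ∀ {a b : ℕ}, a < b → L ++ [a] < L ++ [b] := by
  induction L with
  | nil => intro a b h; exact List.Lex.rel h
  | cons x t ih => intro a b h; exact List.Lex.cons (ih h)

theorem lex_append_le {L M : List ℕ} (hlen : L.length = M.length)
    (h : L ≤ M) (a : ℕ) : L ++ [a] ≤ M ++ [a] := by
  rcases lt_or_eq_of_le h with h | h
  · exact le_of_lt (lex_append_strict hlen h a a)
  · subst h; exact le_rfl

theorem le_of_lex_append_le {L M : List ℕ} (hlen : L.length = M.length)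
    {a b : ℕ} (h : L ++ [a] ≤ M ++ [b]) : L ≤ M := by
  by_contra hc
  push_neg at hc
  exact absurd h (not_le_of_gt (lex_append_strict hlen.symm hc b a))

open Classical in
/-- the `F`-visitation bit of a node. -/
noncomputable def bitv (v : Q × ℕ) : ℕ := if v.1 ∈ A.F then 1 else 0

variable {A w}

theorem length_of_mem_runProfiles {v : Q × ℕ} {L : List ℕ} (h : L ∈ runProfiles A w v) :
    L.length = v.2 + 1 := by
  obtain ⟨p, -, -, -, rfl⟩ := h
  simp

theorem ends_of_mem_runProfiles {v : Q × ℕ} {L : List ℕ} (h : L ∈ runProfiles A w v) :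
    ∃ L', L = L' ++ [bitv A v] := by
  classical
  obtain ⟨p, -, -, hv, rfl⟩ := h
  refine ⟨(List.range v.2).map (fun j => if p j ∈ A.F then 1 else 0), ?_⟩
  rw [List.range_succ, List.map_append]
  simp [bitv, hv]

theorem runProfiles_finite (v : Q × ℕ) : (runProfiles A w v).Finite := by
  classical
  have : runProfiles A w v ⊆ Set.range
      (fun b : Fin (v.2 + 1) → Bool =>
        (List.range (v.2 + 1)).map (fun j => if h : j < v.2 + 1 then (cond (b ⟨j, h⟩) 1 0) else 0)) := by
    rintro L ⟨p, -, -, -, rfl⟩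
    refine ⟨fun k => decide (p k ∈ A.F), ?_⟩
    apply List.map_congr_left
    intro j hj
    rw [List.mem_range] at hj
    simp [hj]
  exact Set.Finite.subset (Set.finite_range _) this

theorem exists_isMaxProfile {v : Q × ℕ} (hv : memV A w v) : ∃ L, IsMaxProfile A w v L := by
  obtain ⟨L, hL, hmax⟩ := Set.Finite.exists_maximalFor id _ (runProfiles_finite v) hv
  refine ⟨L, hL, fun L' hL' => ?_⟩
  rw [lexLE_iff]
  rcases le_total L' L with h | h
  · exact h
  · exact hmax hL' h

theorem isMaxProfile_unique {v : Q × ℕ} {L M : List ℕ}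
    (hL : IsMaxProfile A w v L) (hM : IsMaxProfile A w v M) : L = M := by
  have h1 := hL.2 M hM.1
  have h2 := hM.2 L hL.1
  rw [lexLE_iff] at h1 h2
  exact le_antisymm h2 h1

theorem profile_isMax {v : Q × ℕ} (hv : memV A w v) : IsMaxProfile A w v (profile A w v) := by
  have h := exists_isMaxProfile hv
  rw [profile, dif_pos h]
  exact h.choose_spec

theorem profile_mem {v : Q × ℕ} (hv : memV A w v) : profile A w v ∈ runProfiles A w v :=
  (profile_isMax hv).1

theorem profile_length {v : Q × ℕ} (hv : memV A w v) : (profile A w v).length = v.2 + 1 :=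
  length_of_mem_runProfiles (profile_mem hv)

theorem profile_ends {v : Q × ℕ} (hv : memV A w v) :
    ∃ L', profile A w v = L' ++ [bitv A v] :=
  ends_of_mem_runProfiles (profile_mem hv)

theorem profile_le {v : Q × ℕ} {L : List ℕ} (h : L ∈ runProfiles A w v) :
    L ≤ profile A w v := by
  have := (profile_isMax ⟨L, h⟩).2 L h
  rwa [lexLE_iff] at this

theorem mem_runProfiles_succ {q : Q} {i : ℕ} {L : List ℕ} :
    L ∈ runProfiles A w (q, i + 1) ↔
      ∃ u : Q × ℕ, u.2 = i ∧ q ∈ A.ρ u.1 (w i) ∧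
        ∃ L' ∈ runProfiles A w u, L = L' ++ [bitv A (q, i+1)] := by
  classical
  constructor
  · rintro ⟨p, h0, hstep, hend, rfl⟩
    refine ⟨(p i, i), rfl, ?_, (List.range (i+1)).map (fun j => if p j ∈ A.F then 1 else 0),
      ⟨p, h0, fun j hj => hstep j (Nat.lt_succ_of_lt hj), rfl, rfl⟩, ?_⟩
    · have := hstep i (Nat.lt_succ_self i)
      rwa [hend] at this
    · rw [List.range_succ, List.map_append]
      simp [bitv, hend]
  · rintro ⟨⟨uq, ui⟩, hu2, hρ, L', ⟨p, h0, hstep, hend, rfl⟩, rfl⟩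
    simp only at hu2 hρ hstep hend
    subst hu2
    refine ⟨fun j => if j = ui + 1 then q else p j, by simpa using h0, ?_, by simp, ?_⟩
    · intro j hj
      simp only at hj
      rcases Nat.lt_succ_iff_lt_or_eq.mp hj with hj | rfl
      · have h1 : j + 1 ≠ ui + 1 := by omega
        have h2 : j ≠ ui + 1 := by omega
        beta_reduce
        simp only [h1, h2, if_false]
        exact hstep j (by omega)
      · beta_reduce
        rw [if_pos rfl, if_neg (show j ≠ j + 1 by omega), hend]
        exact hρ
    · show _ = (List.range (ui + 1 + 1)).map _
      rw [List.range_succ (n := ui + 1), List.map_append]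
      congr 1
      · apply List.map_congr_left
        intro j hj
        rw [List.mem_range] at hj
        beta_reduce
        rw [if_neg (show j ≠ ui + 1 by omega)]
      · simp [bitv]

theorem memV_succ {q : Q} {i : ℕ} (h : memV A w (q, i + 1)) :
    ∃ u, edgeG A w u (q, i + 1) := by
  obtain ⟨L, hL⟩ := h
  rw [mem_runProfiles_succ] at hL
  obtain ⟨u, hu2, hρ, L', hL', -⟩ := hL
  exact ⟨u, ⟨L', hL'⟩, by simp [hu2], by rw [hu2]; exact hρ⟩

theorem edgeG_level {u v : Q × ℕ} (h : edgeG A w u v) : v.2 = u.2 + 1 := h.2.1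

/-- Profile recurrence: every node of positive level has a maximal parent,
and its profile is the parent's profile extended by its own bit. -/
theorem exists_max_parent {v : Q × ℕ} (hv : memV A w v) {i : ℕ} (hi : v.2 = i + 1) :
    ∃ u, edgeG' A w u v ∧ profile A w v = profile A w u ++ [bitv A v] := by
  classical
  obtain ⟨q, j⟩ := v
  simp only at hi
  subst hi
  -- parents
  have hne : {u | edgeG A w u (q, i+1)}.Nonempty := memV_succ hv
  have hfin : {u | edgeG A w u (q, i+1)}.Finite := by
    apply Set.Finite.subset (Set.Finite.prod (Set.finite_univ (α := Q)) (Set.finite_singleton i))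
    rintro u hu
    exact ⟨trivial, by have := hu.2.1; simp at this ⊢; omega⟩
  obtain ⟨u, hu, hmax⟩ := Set.Finite.exists_maximalFor (fun x => profile A w x) _ hfin hne
  have hmax' : ∀ u' ∈ {u | edgeG A w u (q, i+1)}, profile A w u' ≤ profile A w u := by
    intro u' hu'
    rcases le_total (profile A w u') (profile A w u) with h | h
    · exact h
    · exact hmax hu' h
  -- profile u ++ bit ∈ runProfiles v
  have humem : memV A w u := hu.1
  have hulevel : u.2 = i := by have := hu.2.1; omega
  have h1 : profile A w u ++ [bitv A (q, i+1)] ∈ runProfiles A w (q, i+1) := by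
    rw [mem_runProfiles_succ]
    exact ⟨u, hulevel, by rw [← hulevel]; exact hu.2.2, profile A w u, profile_mem humem, rfl⟩
  -- profile v comes from some parent
  have h2 := profile_mem hv
  rw [mem_runProfiles_succ] at h2
  obtain ⟨u₀, hu₀2, hρ₀, L', hL', hPv⟩ := h2
  have hu₀ : u₀ ∈ {u | edgeG A w u (q, i+1)} :=
    ⟨⟨L', hL'⟩, by simp [hu₀2], by rw [hu₀2]; exact hρ₀⟩
  have hlenL' : L'.length = u₀.2 + 1 := length_of_mem_runProfiles hL'
  have hlen0 : (profile A w u₀).length = u₀.2 + 1 := profile_length hu₀.1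
  have hlenu : (profile A w u).length = u₀.2 + 1 := by
    rw [profile_length humem, hulevel, hu₀2]
  have key : profile A w (q, i+1) = profile A w u ++ [bitv A (q, i+1)] := by
    have c1 : profile A w (q, i+1) ≤ profile A w u ++ [bitv A (q, i+1)] := by
      rw [hPv]
      calc L' ++ [bitv A (q, i+1)] ≤ profile A w u₀ ++ [bitv A (q, i+1)] :=
            lex_append_le (by rw [hlenL', hlen0]) (profile_le hL') _
        _ ≤ profile A w u ++ [bitv A (q, i+1)] :=
            lex_append_le (by rw [hlen0, hlenu]) (hmax' u₀ hu₀) _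
    exact le_antisymm c1 (profile_le h1)
  refine ⟨u, ⟨hu, fun u' hu' => ?_⟩, key⟩
  rw [lexLE_iff]
  exact hmax' u' hu'

theorem edgeG'_iff {u v : Q × ℕ} (hv : memV A w v) {i : ℕ} (hi : v.2 = i + 1) :
    edgeG' A w u v ↔ edgeG A w u v ∧ profile A w v = profile A w u ++ [bitv A v] := by
  obtain ⟨ump, hump, hprof⟩ := exists_max_parent hv hi
  constructor
  · rintro ⟨he, hmax⟩
    refine ⟨he, ?_⟩
    have h1 := hmax ump hump.1
    have h2 := hump.2 u he
    rw [lexLE_iff] at h1 h2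
    have : profile A w u = profile A w ump := le_antisymm h2 h1
    rw [hprof, this]
  · rintro ⟨he, hpr⟩
    refine ⟨he, fun u' hu' => ?_⟩
    rw [lexLE_iff]
    have h1 : profile A w u' ++ [bitv A v] ∈ runProfiles A w v := by
      obtain ⟨q, j⟩ := v
      simp only at hi; subst hi
      rw [mem_runProfiles_succ]
      have hl : u'.2 = i := by have := hu'.2.1; omega
      exact ⟨u', hl, by rw [← hl]; exact hu'.2.2, _, profile_mem hu'.1, rfl⟩
    have h2 : profile A w u' ++ [bitv A v] ≤ profile A w u ++ [bitv A v] := by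
      rw [← hpr]; exact profile_le h1
    have l1 : (profile A w u').length = (profile A w u).length := by
      rw [profile_length hu'.1, profile_length he.1]
      have e1 := edgeG_level hu'
      have e2 := edgeG_level he
      omega
    exact le_of_lex_append_le l1 h2

/-! ### Classes -/

theorem mem_classOf_self {u : Q × ℕ} (hu : memV A w u) : u ∈ classOf A w u := ⟨hu, rfl, rfl⟩

theorem classOf_eq_classOf {u v : Q × ℕ} (hv : memV A w v) (hl : v.2 = u.2)
    (hp : profile A w v = profile A w u) : classOf A w v = classOf A w u := by
  ext x
  constructor
  · rintro ⟨h1, h2, h3⟩; exact ⟨h1, by omega, by rw [h3, hp]⟩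
  · rintro ⟨h1, h2, h3⟩; exact ⟨h1, by omega, by rw [h3, hp]⟩

variable (A w) in
/-- the profile of a class. -/
noncomputable def prf (C : Set (Q × ℕ)) : List ℕ :=
  letI := Classical.dec C.Nonempty
  if h : C.Nonempty then profile A w h.some else []

theorem prf_classOf {u : Q × ℕ} (hu : memV A w u) :
    prf A w (classOf A w u) = profile A w u := by
  have hne : (classOf A w u).Nonempty := ⟨u, mem_classOf_self hu⟩
  rw [prf, dif_pos hne]
  exact hne.some_mem.2.2

theorem classAt_classOf {u : Q × ℕ} (hu : memV A w u) : ClassAt A w (classOf A w u) u.2 :=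
  ⟨u, hu, rfl, rfl⟩

theorem classAt_elim {C : Set (Q × ℕ)} {i : ℕ} (h : ClassAt A w C i) :
    ∃ u, memV A w u ∧ u.2 = i ∧ C = classOf A w u ∧ prf A w C = profile A w u := by
  obtain ⟨u, hu, hl, hC⟩ := h
  exact ⟨u, hu, hl, hC, by rw [hC]; exact prf_classOf hu⟩

theorem mem_of_classAt {C : Set (Q × ℕ)} {i : ℕ} (h : ClassAt A w C i) {v : Q × ℕ}
    (hv : v ∈ C) : memV A w v ∧ v.2 = i ∧ profile A w v = prf A w C := by
  obtain ⟨u, hu, hl, hC, hprf⟩ := classAt_elim h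
  rw [hC] at hv
  exact ⟨hv.1, by rw [hv.2.1, hl], by rw [hv.2.2, hprf]⟩

theorem classAt_nonempty {C : Set (Q × ℕ)} {i : ℕ} (h : ClassAt A w C i) : C.Nonempty := by
  obtain ⟨u, hu, -, hC, -⟩ := classAt_elim h
  exact ⟨u, hC ▸ mem_classOf_self hu⟩

theorem prf_length {C : Set (Q × ℕ)} {i : ℕ} (h : ClassAt A w C i) :
    (prf A w C).length = i + 1 := by
  obtain ⟨u, hu, hl, -, hprf⟩ := classAt_elim h
  rw [hprf, profile_length hu, hl]

theorem level_unique {C : Set (Q × ℕ)} {i j : ℕ} (h : ClassAt A w C i) (h' : ClassAt A w C j) :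
    i = j := by
  have := prf_length h
  have := prf_length h'
  omega

theorem class_eq_of_prf_eq {C D : Set (Q × ℕ)} {i : ℕ} (hC : ClassAt A w C i)
    (hD : ClassAt A w D i) (h : prf A w C = prf A w D) : C = D := by
  obtain ⟨u, hu, hlu, hCu, hpu⟩ := classAt_elim hC
  obtain ⟨v, hv, hlv, hDv, hpv⟩ := classAt_elim hD
  rw [hCu, hDv]
  exact classOf_eq_classOf hu (by omega) (by rw [← hpu, ← hpv, h])

theorem prf_ends {C : Set (Q × ℕ)} {i : ℕ} (h : ClassAt A w C i) :
    ∃ L b, prf A w C = L ++ [b] ∧ (IsFClass A C ↔ b = 1) := by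
  classical
  obtain ⟨u, hu, hl, hCu, hpu⟩ := classAt_elim h
  obtain ⟨L, hL⟩ := profile_ends hu
  refine ⟨L, bitv A u, by rw [hpu, hL], ?_, ?_⟩
  · intro hF
    have huF : u.1 ∈ A.F := hF u (hCu ▸ mem_classOf_self hu)
    simp [bitv, huF]
  · intro hb v hvC
    obtain ⟨hv, hvl, hvp⟩ := mem_of_classAt h hvC
    obtain ⟨L', hL'⟩ := profile_ends hv
    have : L' ++ [bitv A v] = L ++ [bitv A u] := by rw [← hL', ← hL, ← hpu, ← hvp]
    have hbit : bitv A v = 1 := by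
      have h2 := congrArg (fun l => l.getLast?) this
      simp at h2
      rw [h2, ← hb]
    by_contra hvF
    simp [bitv, hvF] at hbit

theorem not_isFClass_of_ends_zero {C : Set (Q × ℕ)} {i : ℕ} (h : ClassAt A w C i)
    {L : List ℕ} (hL : prf A w C = L ++ [0]) : ¬ IsFClass A C := by
  obtain ⟨L', b, hL', hiff⟩ := prf_ends h
  intro hF
  have : b = 1 := hiff.mp hF
  rw [hL, this] at hL'
  have := congrArg (fun l => l.getLast?) hL'
  simp at this

theorem classesAt_finite (i : ℕ) : {C : Set (Q × ℕ) | ClassAt A w C i}.Finite := by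
  have h1 : {C : Set (Q × ℕ) | ClassAt A w C i} ⊆
      (fun u => classOf A w u) '' {u : Q × ℕ | memV A w u ∧ u.2 = i} := by
    rintro C ⟨u, hu, hl, hC⟩
    exact ⟨u, ⟨hu, hl⟩, hC.symm⟩
  have h2 : {u : Q × ℕ | memV A w u ∧ u.2 = i}.Finite := by
    apply Set.Finite.subset (Set.Finite.prod (Set.finite_univ (α := Q)) (Set.finite_singleton i))
    rintro u ⟨-, hl⟩
    exact ⟨trivial, hl⟩
  exact Set.Finite.subset (h2.image _) h1

theorem profLE_iff {C D : Set (Q × ℕ)} {i j : ℕ} (hC : ClassAt A w C i) (hD : ClassAt A w D j) :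
    profLE A w C D ↔ prf A w C ≤ prf A w D := by
  constructor
  · intro h
    obtain ⟨u, hu⟩ := classAt_nonempty hC
    obtain ⟨v, hv⟩ := classAt_nonempty hD
    have h1 := (mem_of_classAt hC hu).2.2
    have h2 := (mem_of_classAt hD hv).2.2
    have := h u hu v hv
    rw [lexLE_iff] at this
    rwa [h1, h2] at this
  · intro h u hu v hv
    rw [lexLE_iff, (mem_of_classAt hC hu).2.2, (mem_of_classAt hD hv).2.2]
    exact h

theorem profLT_iff {C D : Set (Q × ℕ)} {i j : ℕ} (hC : ClassAt A w C i) (hD : ClassAt A w D j) :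
    profLT A w C D ↔ prf A w C < prf A w D := by
  constructor
  · intro h
    obtain ⟨u, hu⟩ := classAt_nonempty hC
    obtain ⟨v, hv⟩ := classAt_nonempty hD
    have h1 := (mem_of_classAt hC hu).2.2
    have h2 := (mem_of_classAt hD hv).2.2
    have := h u hu v hv
    rw [lexLT_iff] at this
    rwa [h1, h2] at this
  · intro h u hu v hv
    rw [lexLT_iff, (mem_of_classAt hC hu).2.2, (mem_of_classAt hD hv).2.2]
    exact h

/-! ### The tree structure -/

theorem childC_levels {C D : Set (Q × ℕ)} (h : childC A w C D) :
    ∃ i, ClassAt A w C i ∧ ClassAt A w D (i + 1) := by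
  obtain ⟨u, v, he, hv, hC, hD⟩ := h
  have hu : memV A w u := he.1.1
  refine ⟨u.2, hC ▸ classAt_classOf hu, ?_⟩
  have := edgeG_level he.1
  rw [hD, ← this]
  exact classAt_classOf hv

theorem childC_iff {C D : Set (Q × ℕ)} {i j : ℕ} (hC : ClassAt A w C i) (hD : ClassAt A w D j) :
    childC A w C D ↔ j = i + 1 ∧ prf A w C = (prf A w D).dropLast := by
  constructor
  · rintro ⟨u, v, he, hv, hCu, hDv⟩
    have hu : memV A w u := he.1.1
    have hlu : u.2 = i := level_unique (hCu ▸ classAt_classOf hu) hC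
    have hlv : v.2 = j := level_unique (hDv ▸ classAt_classOf hv) hD
    have hj : j = i + 1 := by have := edgeG_level he.1; omega
    have hprf : profile A w v = profile A w u ++ [bitv A v] :=
      ((edgeG'_iff hv (by omega : v.2 = i + 1)).mp he).2
    refine ⟨hj, ?_⟩
    rw [hCu, hDv, prf_classOf hu, prf_classOf hv, hprf]
    simp
  · rintro ⟨rfl, hdrop⟩
    obtain ⟨v, hv, hlv, hDv, hpv⟩ := classAt_elim hD
    obtain ⟨u₀, hu₀, hlu₀, hCu₀, hpu₀⟩ := classAt_elim hC
    obtain ⟨u, hu, hprf⟩ := exists_max_parent hv hlv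
    have humem : memV A w u := hu.1.1
    have hplu : profile A w u = profile A w u₀ := by
      rw [← hpu₀, hdrop, hpv, hprf]
      simp
    have hlu : u.2 = u₀.2 := by
      have h1 := profile_length humem
      have h2 := profile_length hu₀
      rw [hplu] at h1
      omega
    refine ⟨u, v, hu, hv, ?_, hDv⟩
    rw [hCu₀]
    exact (classOf_eq_classOf humem hlu hplu).symm

theorem exists_parentC {D : Set (Q × ℕ)} {i : ℕ} (hD : ClassAt A w D (i + 1)) :
    ∃ C, ClassAt A w C i ∧ childC A w C D := by
  obtain ⟨v, hv, hlv, hDv, hpv⟩ := classAt_elim hD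
  obtain ⟨u, hu, hprf⟩ := exists_max_parent hv hlv
  have humem : memV A w u := hu.1.1
  have hlu : u.2 = i := by have := edgeG_level hu.1; omega
  exact ⟨classOf A w u, hlu ▸ classAt_classOf humem, u, v, hu, hv, rfl, hDv⟩

theorem descC_take {C D : Set (Q × ℕ)} (h : DescC A w C D) {i : ℕ} (hC : ClassAt A w C i) :
    ∃ j, i ≤ j ∧ ClassAt A w D j ∧ prf A w C = (prf A w D).take (i + 1) := by
  have h' : Relation.ReflTransGen (childC A w) C D := h
  clear h
  induction h' with
  | refl =>
      exact ⟨i, le_rfl, hC, by rw [List.take_of_length_le (le_of_eq (prf_length hC))]⟩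
  | @tail E D2 hCE hED ih =>
      obtain ⟨j, hij, hE, hprf⟩ := ih
      obtain ⟨j', hE', hD⟩ := childC_levels hED
      have hj' : j' = j := level_unique hE' hE
      rw [hj'] at hD
      refine ⟨j + 1, by omega, hD, ?_⟩
      have hdrop := ((childC_iff hE hD).mp hED).2
      rw [hprf, hdrop, List.dropLast_eq_take, List.take_take, prf_length hD]
      congr 1
      omega

theorem descC_of_take : ∀ (j : ℕ) {C D : Set (Q × ℕ)} {i : ℕ}, ClassAt A w C i →
    ClassAt A w D j → i ≤ j → prf A w C = (prf A w D).take (i + 1) →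
    DescC A w C D := by
  intro j
  induction j with
  | zero =>
      intro C D i hC hD hij h
      have : i = 0 := by omega
      subst this
      have : C = D := class_eq_of_prf_eq hC hD (by
        rw [h, List.take_of_length_le (le_of_eq (prf_length hD))])
      exact this ▸ Relation.ReflTransGen.refl
  | succ j ih =>
      intro C D i hC hD hij h
      rcases Nat.eq_or_lt_of_le hij with rfl | hlt
      · have : C = D := class_eq_of_prf_eq hC hD (by
          rw [h, List.take_of_length_le (le_of_eq (prf_length hD))])
        exact this ▸ Relation.ReflTransGen.refl
      · obtain ⟨P, hP, hPD⟩ := exists_parentC hD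
        have hPprf : prf A w P = (prf A w D).dropLast := ((childC_iff hP hD).mp hPD).2
        have hprf : prf A w C = (prf A w P).take (i + 1) := by
          rw [h, hPprf, List.dropLast_eq_take, List.take_take, prf_length hD]
          congr 1
          omega
        exact Relation.ReflTransGen.tail (ih hC hP (by omega) hprf) hPD

theorem descC_self_level {C D : Set (Q × ℕ)} {i : ℕ} (hC : ClassAt A w C i)
    (hD : ClassAt A w D i) (h : DescC A w C D) : C = D := by
  obtain ⟨j, hij, hD', hprf⟩ := descC_take h hC
  have : j = i := level_unique hD' hD
  subst this
  exact class_eq_of_prf_eq hC hD (by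
    rw [hprf, List.take_of_length_le (le_of_eq (prf_length hD))])

theorem anc_unique {C C' D : Set (Q × ℕ)} {i jD : ℕ} (hC : ClassAt A w C i)
    (hC' : ClassAt A w C' i) (hD : ClassAt A w D jD)
    (h : DescC A w C D) (h' : DescC A w C' D) : C = C' := by
  obtain ⟨j, -, hD1, hp1⟩ := descC_take h hC
  obtain ⟨j', -, hD2, hp2⟩ := descC_take h' hC'
  have e1 : j = jD := level_unique hD1 hD
  have e2 : j' = jD := level_unique hD2 hD
  subst e1; subst e2
  exact class_eq_of_prf_eq hC hC' (by rw [hp1, hp2])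

theorem anc_exists : ∀ (j : ℕ) {D : Set (Q × ℕ)}, ClassAt A w D j → ∀ {i : ℕ}, i ≤ j →
    ∃ C, ClassAt A w C i ∧ DescC A w C D := by
  intro j
  induction j with
  | zero =>
      intro D hD i hij
      have : i = 0 := by omega
      subst this
      exact ⟨D, hD, Relation.ReflTransGen.refl⟩
  | succ j ih =>
      intro D hD i hij
      rcases Nat.eq_or_lt_of_le hij with rfl | hlt
      · exact ⟨D, hD, Relation.ReflTransGen.refl⟩
      · obtain ⟨P, hP, hPD⟩ := exists_parentC hD
        obtain ⟨C, hC, hCP⟩ := ih hP (Nat.lt_succ_iff.mp hlt)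
        exact ⟨C, hC, Relation.ReflTransGen.tail hCP hPD⟩

theorem desc_mid {R D : Set (Q × ℕ)} {l j' : ℕ} (hR : ClassAt A w R l) (hD : ClassAt A w D j')
    (h : DescC A w R D) {j : ℕ} (hlj : l ≤ j) (hjj' : j ≤ j') :
    ∃ E, ClassAt A w E j ∧ DescC A w R E ∧ DescC A w E D := by
  obtain ⟨E, hE, hED⟩ := anc_exists _ hD hjj'
  obtain ⟨j2, -, hD2, hpR⟩ := descC_take h hR
  obtain ⟨j3, -, hD3, hpE⟩ := descC_take hED hE
  have e2 : j2 = j' := level_unique hD2 hD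
  have e3 : j3 = j' := level_unique hD3 hD
  subst e2; subst e3
  have : prf A w R = (prf A w E).take (l + 1) := by
    rw [hpR, hpE, List.take_take]
    congr 1
    omega
  exact ⟨E, hE, descC_of_take _ hR hE hlj this, hED⟩


/-! ### Small helpers -/

theorem infinite_of_unbounded {S : Set ℕ} (h : ∀ n, ∃ s ∈ S, n ≤ s) : S.Infinite := by
  apply Set.infinite_of_not_bddAbove
  rintro ⟨b, hb⟩
  obtain ⟨s, hs, hbs⟩ := h (b + 1)
  exact absurd (hb hs) (by omega)

theorem exists_min_class {S : Set (Set (Q × ℕ))} {i : ℕ} (hS : ∀ C ∈ S, ClassAt A w C i)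
    (hne : S.Nonempty) : ∃ C ∈ S, ∀ D ∈ S, prf A w C ≤ prf A w D := by
  have hfin : S.Finite := Set.Finite.subset (classesAt_finite i) hS
  obtain ⟨C, hC, hmin⟩ := Set.Finite.exists_minimalFor (fun C => prf A w C) S hfin hne
  refine ⟨C, hC, fun D hD => ?_⟩
  rcases le_total (prf A w C) (prf A w D) with h | h
  · exact h
  · exact hmin hD h

theorem child_prf_append {C D : Set (Q × ℕ)} {i : ℕ} (hC : ClassAt A w C i)
    (hD : ClassAt A w D (i + 1)) (h : childC A w C D) :
    ∃ b, prf A w D = prf A w C ++ [b] := by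
  have hdrop := ((childC_iff hC hD).mp h).2
  have hne : prf A w D ≠ [] := by
    intro hnil
    have := prf_length hD
    rw [hnil] at this
    simp at this
  exact ⟨(prf A w D).getLast hne, by rw [hdrop, List.dropLast_append_getLast hne]⟩

theorem parent_unique {C C' D : Set (Q × ℕ)} {i i' j : ℕ} (hC : ClassAt A w C i)
    (hC' : ClassAt A w C' i') (hD : ClassAt A w D j)
    (h : childC A w C D) (h' : childC A w C' D) : C = C' := by
  have h1 := (childC_iff hC hD).mp h
  have h2 := (childC_iff hC' hD).mp h'
  have : i = i' := by omega
  subst this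
  exact class_eq_of_prf_eq hC hC' (by rw [h1.2, h2.2])

theorem branch_desc {b : ℕ → Set (Q × ℕ)} (hb : ∀ i, childC A w (b i) (b (i + 1)))
    {i j : ℕ} (hij : i ≤ j) : DescC A w (b i) (b j) := by
  induction j with
  | zero =>
      have : i = 0 := by omega
      subst this
      exact Relation.ReflTransGen.refl
  | succ j ih =>
      rcases Nat.eq_or_lt_of_le hij with rfl | hlt
      · exact Relation.ReflTransGen.refl
      · exact Relation.ReflTransGen.tail (ih (by omega)) (hb j)

theorem prf_bits {C : Set (Q × ℕ)} {i : ℕ} (hC : ClassAt A w C i) :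
    ∀ x ∈ prf A w C, x = 0 ∨ x = 1 := by
  obtain ⟨u, hu, hl, hCu, hprf⟩ := classAt_elim hC
  rw [hprf]
  obtain ⟨p, -, -, -, hp⟩ := profile_mem hu
  rw [hp]
  intro x hx
  rw [List.mem_map] at hx
  obtain ⟨j, -, hj⟩ := hx
  by_cases h : p j ∈ A.F
  · right; rw [← hj]; simp [h]
  · left; rw [← hj]; simp [h]

theorem lex_diverge : ∀ {L M : List ℕ}, L < M → L.length = M.length →
    ∃ d P a c, d + 1 ≤ L.length ∧ L.take d = M.take d ∧
      L.take (d + 1) = P ++ [a] ∧ M.take (d + 1) = P ++ [c] ∧ a < c := by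
  intro L M h
  induction h with
  | nil => intro h; simp at h
  | @rel a l b m hab =>
      intro hlen
      exact ⟨0, [], a, b, by simp, by simp, by simp, by simp, hab⟩
  | @cons a l m h ih =>
      intro hlen
      obtain ⟨d, P, x, c, hd, h1, h2, h3, hxc⟩ := ih (by simpa using hlen)
      refine ⟨d + 1, a :: P, x, c, by simpa using hd, ?_, ?_, ?_, hxc⟩
      · rw [List.take_succ_cons, List.take_succ_cons, h1]
      · rw [List.take_succ_cons, h2]; rfl
      · rw [List.take_succ_cons, h3]; rfl

/-! ### Labels -/

variable {gl : Set (Q × ℕ) → ℕ}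

variable (A w) in
/-- label `m` is present at level `j`. -/
def Pres (gl : Set (Q × ℕ) → ℕ) (m j : ℕ) : Prop := ∃ C, ClassAt A w C j ∧ gl C = m

theorem before_trichotomy {C D : Set (Q × ℕ)} {i j : ℕ} (hC : ClassAt A w C i)
    (hD : ClassAt A w D j) :
    (C = D ∧ i = j) ∨ BeforeC A w C i D j ∨ BeforeC A w D j C i := by
  rcases lt_trichotomy i j with h | rfl | h
  · exact Or.inr (Or.inl (Or.inl h))
  · rcases lt_trichotomy (prf A w C) (prf A w D) with h | h | h
    · exact Or.inr (Or.inl (Or.inr ⟨rfl, (profLT_iff hC hD).mpr h⟩))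
    · exact Or.inl ⟨class_eq_of_prf_eq hC hD h, rfl⟩
    · exact Or.inr (Or.inr (Or.inr ⟨rfl, (profLT_iff hD hC).mpr h⟩))
  · exact Or.inr (Or.inr (Or.inl h))

theorem first_exists {m : ℕ} (h : ∃ j, Pres A w gl m j) :
    ∃ Fm l, IsFirst A w gl m Fm l := by
  classical
  let S : Set ℕ := {j | Pres A w gl m j}
  have hS : S.Nonempty := h
  let l := sInf S
  have hl : l ∈ S := Nat.sInf_mem hS
  obtain ⟨C₀, hC₀, hgl₀⟩ := hl
  let T : Set (Set (Q × ℕ)) := {C | ClassAt A w C l ∧ gl C = m}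
  obtain ⟨Fm, hFmT, hmin⟩ := exists_min_class (S := T) (fun C hC => hC.1) ⟨C₀, hC₀, hgl₀⟩
  refine ⟨Fm, l, hFmT.1, hFmT.2, ?_⟩
  rintro D j hD hglD (hlt | ⟨rfl, hplt⟩)
  · have : l ≤ j := Nat.sInf_le ⟨D, hD, hglD⟩
    omega
  · have := hmin D ⟨hD, hglD⟩
    have := (profLT_iff hD hFmT.1).mp hplt
    exact absurd this (not_lt_of_ge ‹prf A w Fm ≤ prf A w D›)

theorem first_unique {m : ℕ} {F F' : Set (Q × ℕ)} {l l' : ℕ}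
    (h : IsFirst A w gl m F l) (h' : IsFirst A w gl m F' l') : F = F' ∧ l = l' := by
  rcases before_trichotomy h.1 h'.1 with ⟨he, hl⟩ | hb | hb
  · exact ⟨he, hl⟩
  · exact absurd hb (h'.2.2 F l h.1 h.2.1)
  · exact absurd hb (h.2.2 F' l' h'.1 h'.2.1)

theorem lmd_unique {m i : ℕ} {C C' : Set (Q × ℕ)} (h : IsLmd A w gl m i C)
    (h' : IsLmd A w gl m i C') : C = C' := by
  have h1 := (profLE_iff h.1 h'.1).mp (h.2.2 C' h'.1 h'.2.1)
  have h2 := (profLE_iff h'.1 h.1).mp (h'.2.2 C h.1 h.2.1)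
  exact class_eq_of_prf_eq h.1 h'.1 (le_antisymm h1 h2)

theorem lmd_of_min {m l i : ℕ} {Fm C : Set (Q × ℕ)} (hF : IsFirst A w gl m Fm l)
    (hC : ClassAt A w C i) (hdesc : DescC A w Fm C)
    (hmin : ∀ D, ClassAt A w D i → DescC A w Fm D → prf A w C ≤ prf A w D) :
    IsLmd A w gl m i C := by
  refine ⟨hC, ⟨Fm, l, hF, hdesc⟩, ?_⟩
  rintro D hD ⟨F', l', hF', hdesc'⟩
  obtain ⟨he, -⟩ := first_unique hF hF'
  rw [profLE_iff hC hD, ← lexLE_iff] at *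
  rw [lexLE_iff]
  exact hmin D hD (he ▸ hdesc')

theorem lmd_min_prop {m l i : ℕ} {Fm C : Set (Q × ℕ)} (hF : IsFirst A w gl m Fm l)
    (hC : IsLmd A w gl m i C) :
    DescC A w Fm C ∧ ∀ D, ClassAt A w D i → DescC A w Fm D → prf A w C ≤ prf A w D := by
  obtain ⟨hCc, ⟨F', l', hF', hdesc⟩, hmin⟩ := hC
  obtain ⟨he, -⟩ := first_unique hF hF'
  subst he
  refine ⟨hdesc, fun D hD hFD => ?_⟩
  exact (profLE_iff hCc hD).mp (hmin D hD ⟨Fm, l', hF', hFD⟩)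

theorem lmd_exists {m l i : ℕ} {Fm : Set (Q × ℕ)} (hF : IsFirst A w gl m Fm l)
    (hne : ∃ D, ClassAt A w D i ∧ DescC A w Fm D) : ∃ C, IsLmd A w gl m i C := by
  obtain ⟨C, hC, hmin⟩ := exists_min_class (S := {D | ClassAt A w D i ∧ DescC A w Fm D})
    (fun C hC => hC.1) (by obtain ⟨D, h1, h2⟩ := hne; exact ⟨D, h1, h2⟩)
  exact ⟨C, lmd_of_min hF hC.1 hC.2 (fun D h1 h2 => hmin D ⟨h1, h2⟩)⟩

variable (hgl : GlSpec A w gl)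
include hgl

/-- Key collapse of the spec: every class is the `lmd` of its own label. -/
theorem spec_lmd {C : Set (Q × ℕ)} {i : ℕ} (hC : ClassAt A w C i) :
    IsLmd A w gl (gl C) i C := by
  by_cases hex : ∃ m, IsLmd A w gl m i C
  · exact ((hgl.2 C i hC).1 hex).1
  · exfalso
    obtain ⟨Fm, l, hF⟩ := first_exists (gl := gl) (m := gl C) ⟨i, C, hC, rfl⟩
    rcases before_trichotomy hF.1 hC with ⟨he, hl⟩ | hb | hb
    · rw [he] at hF
      rw [hl] at hF
      apply hex
      refine ⟨gl C, lmd_of_min hF hC Relation.ReflTransGen.refl ?_⟩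
      intro D hD hdesc
      have h2 : C = D := descC_self_level hC hD hdesc
      rw [h2]
    · have h1 := ((hgl.2 C i hC).2 hex).2 Fm l hF.1 hb
      have h2 := hF.2.1
      omega
    · exact hF.2.2 C i hC rfl hb

theorem spec_min {C : Set (Q × ℕ)} {i m : ℕ} (hC : ClassAt A w C i)
    (h : IsLmd A w gl m i C) : gl C ≤ m :=
  ((hgl.2 C i hC).1 ⟨m, h⟩).2 m h

theorem label_unique {C D : Set (Q × ℕ)} {i : ℕ} (hC : ClassAt A w C i)
    (hD : ClassAt A w D i) (h : gl C = gl D) : C = D :=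
  lmd_unique (spec_lmd hgl hC) (h ▸ spec_lmd hgl hD)

omit hgl in
/-- least-child step: the least child of `lmd(m,i)` is `lmd(m,i+1)`. -/
theorem lmd_step {m l i : ℕ} {Fm C D : Set (Q × ℕ)} (hF : IsFirst A w gl m Fm l)
    (hC : IsLmd A w gl m i C) (hD : ClassAt A w D (i + 1)) (hchild : childC A w C D)
    (hleast : ∀ D', ClassAt A w D' (i + 1) → childC A w C D' → prf A w D ≤ prf A w D') :
    IsLmd A w gl m (i + 1) D := by
  obtain ⟨hdesc, hmin⟩ := lmd_min_prop hF hC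
  apply lmd_of_min hF hD (Relation.ReflTransGen.tail hdesc hchild)
  intro E hE hFE
  rcases Relation.ReflTransGen.cases_tail hFE with he | ⟨P, hFP, hPE⟩
  · exfalso
    -- E = Fm, but levels don't match
    have hl1 := level_unique (he ▸ hF.1 : ClassAt A w E l) hE
    have hl2 : l ≤ i := by
      obtain ⟨j2, hj2, hC2, -⟩ := descC_take hdesc hF.1
      have := level_unique hC2 hC.1
      omega
    omega
  · obtain ⟨iP, hPc, hEc⟩ := childC_levels hPE
    have : iP = i := by have := level_unique hEc hE; omega
    subst this
    have hFPdesc : DescC A w Fm P := hFP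
    have hle : prf A w C ≤ prf A w P := hmin P hPc hFPdesc
    rcases lt_or_eq_of_le hle with hlt | heq
    · obtain ⟨bD, hbD⟩ := child_prf_append hC.1 hD hchild
      obtain ⟨bE, hbE⟩ := child_prf_append hPc hE hPE
      rw [hbD, hbE]
      apply le_of_lt
      apply lex_append_strict _ hlt
      rw [prf_length hC.1, prf_length hPc]
    · have : C = P := class_eq_of_prf_eq hC.1 hPc heq
      exact hleast E hE (this ▸ hPE)

omit hgl in
theorem least_child_exists {C : Set (Q × ℕ)} {i : ℕ}
    (hne : ∃ D, ClassAt A w D (i + 1) ∧ childC A w C D) :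
    ∃ D, ClassAt A w D (i + 1) ∧ childC A w C D ∧
      ∀ D', ClassAt A w D' (i + 1) → childC A w C D' → prf A w D ≤ prf A w D' := by
  obtain ⟨D, hD, hmin⟩ := exists_min_class (S := {D | ClassAt A w D (i + 1) ∧ childC A w C D})
    (fun C hC => hC.1) hne
  exact ⟨D, hD.1, hD.2, fun D' h1 h2 => hmin D' ⟨h1, h2⟩⟩


/-! ### Liveness -/

variable (A w) in
/-- `C` (a class at level `i`) has descendants at every later level. -/
def LiveAt (C : Set (Q × ℕ)) (i : ℕ) : Prop :=
  ClassAt A w C i ∧ ∀ j, i ≤ j → ∃ D, ClassAt A w D j ∧ DescC A w C D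

omit hgl

theorem dead_bound {C : Set (Q × ℕ)} {i : ℕ} (hC : ClassAt A w C i) (h : ¬ LiveAt A w C i) :
    ∃ n, ∀ j, n ≤ j → ∀ E, ClassAt A w E j → ¬ DescC A w C E := by
  rw [LiveAt, not_and] at h
  push_neg at h
  obtain ⟨j₀, hj₀, hdead⟩ := h hC
  refine ⟨j₀, fun j hj E hE hdesc => ?_⟩
  obtain ⟨D, hD, hCD, -⟩ := desc_mid hC hE hdesc hj₀ hj
  exact hdead D hD hCD

theorem desc_child_decompose {C E : Set (Q × ℕ)} {i j : ℕ} (hC : ClassAt A w C i)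
    (hE : ClassAt A w E j) (hij : i < j) (hdesc : DescC A w C E) :
    ∃ D, ClassAt A w D (i + 1) ∧ childC A w C D ∧ DescC A w D E := by
  rcases Relation.ReflTransGen.cases_head hdesc with rfl | ⟨D, hCD, hDE⟩
  · exact absurd (level_unique hC hE) (by omega)
  · obtain ⟨i', hC', hD'⟩ := childC_levels hCD
    have : i' = i := level_unique hC' hC
    subst this
    exact ⟨D, hD', hCD, hDE⟩

theorem live_succ {C : Set (Q × ℕ)} {i : ℕ} (hC : LiveAt A w C i) :
    ∃ D, ClassAt A w D (i + 1) ∧ childC A w C D ∧ LiveAt A w D (i + 1) := by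
  classical
  by_contra hcon
  push_neg at hcon
  -- all children are dead
  have hdead : ∀ D, ClassAt A w D (i + 1) → childC A w C D →
      ∃ n, ∀ j, n ≤ j → ∀ E, ClassAt A w E j → ¬ DescC A w D E := by
    intro D hD hchild
    exact dead_bound hD (hcon D hD hchild)
  choose! bnd hbnd using hdead
  have hfin : {D | ClassAt A w D (i + 1) ∧ childC A w C D}.Finite :=
    Set.Finite.subset (classesAt_finite (i + 1)) (fun D hD => hD.1)
  obtain ⟨N, hN⟩ := (hfin.image bnd).bddAbove
  obtain ⟨E, hE, hdesc⟩ := hC.2 (max N (i + 1) + 1) (by omega)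
  obtain ⟨D, hD, hchild, hDE⟩ := desc_child_decompose hC.1 hE (by omega) hdesc
  have hb : bnd D ≤ N := hN (Set.mem_image_of_mem bnd ⟨hD, hchild⟩)
  exact hbnd D hD hchild (max N (i + 1) + 1) (by omega) E hE hDE

theorem least_live_child {C : Set (Q × ℕ)} {i : ℕ} (hC : LiveAt A w C i) :
    ∃ D, ClassAt A w D (i + 1) ∧ childC A w C D ∧ LiveAt A w D (i + 1) ∧
      ∀ D', ClassAt A w D' (i + 1) → childC A w C D' → LiveAt A w D' (i + 1) →
        prf A w D ≤ prf A w D' := by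
  obtain ⟨D₀, h1, h2, h3⟩ := live_succ hC
  obtain ⟨D, hD, hmin⟩ := exists_min_class
    (S := {D | ClassAt A w D (i + 1) ∧ childC A w C D ∧ LiveAt A w D (i + 1)})
    (fun X hX => hX.1) ⟨D₀, h1, h2, h3⟩
  exact ⟨D, hD.1, hD.2.1, hD.2.2, fun D' ha hb hc => hmin D' ⟨ha, hb, hc⟩⟩

/-- The leftmost live branch from a live class. -/
theorem leftmost_branch {R : Set (Q × ℕ)} {l : ℕ} (hR : LiveAt A w R l) :
    ∃ γ : ℕ → Set (Q × ℕ), γ 0 = R ∧ ∀ k, LiveAt A w (γ k) (l + k) ∧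
      childC A w (γ k) (γ (k + 1)) ∧
      ∀ D', ClassAt A w D' (l + k + 1) → childC A w (γ k) D' → LiveAt A w D' (l + k + 1) →
        prf A w (γ (k + 1)) ≤ prf A w D' := by
  classical
  have step : ∀ (n : ℕ) (C : Set (Q × ℕ)), ∃ D, LiveAt A w C n →
      (ClassAt A w D (n + 1) ∧ childC A w C D ∧ LiveAt A w D (n + 1) ∧
        ∀ D', ClassAt A w D' (n + 1) → childC A w C D' → LiveAt A w D' (n + 1) →
          prf A w D ≤ prf A w D') := by
    intro n C
    by_cases h : LiveAt A w C n
    · obtain ⟨D, hD⟩ := least_live_child h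
      exact ⟨D, fun _ => hD⟩
    · exact ⟨∅, fun hl => absurd hl h⟩
  choose stp hstp using step
  set γ : ℕ → Set (Q × ℕ) := fun k => Nat.rec R (fun k' p => stp (l + k') p) k with hγ
  have hlive : ∀ k, LiveAt A w (γ k) (l + k) := by
    intro k
    induction k with
    | zero => exact hR
    | succ k ih => exact (hstp (l + k) (γ k) ih).2.2.1
  refine ⟨γ, rfl, fun k => ⟨hlive k, (hstp (l + k) (γ k) (hlive k)).2.1,
    (hstp (l + k) (γ k) (hlive k)).2.2.2⟩⟩

/-- Extend a forward chain from a class into a full branch of the tree. -/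
theorem full_branch {R : Set (Q × ℕ)} {l : ℕ} (hR : ClassAt A w R l)
    {γ : ℕ → Set (Q × ℕ)} (h0 : γ 0 = R)
    (hchain : ∀ k, ClassAt A w (γ k) (l + k) ∧ childC A w (γ k) (γ (k + 1))) :
    ∃ b : ℕ → Set (Q × ℕ), IsBranch A w b ∧ ∀ k, b (l + k) = γ k := by
  classical
  have hanc : ∀ j, ∃ C, j ≤ l → (ClassAt A w C j ∧ DescC A w C R) := by
    intro j
    by_cases h : j ≤ l
    · obtain ⟨C, hC⟩ := anc_exists l hR h
      exact ⟨C, fun _ => hC⟩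
    · exact ⟨∅, fun hc => absurd hc h⟩
  choose anc hanc using hanc
  have hancl : anc l = R := by
    obtain ⟨h1, h2⟩ := hanc l le_rfl
    exact descC_self_level h1 hR h2
  refine ⟨fun j => if j ≤ l then anc j else γ (j - l), ⟨?_, ?_⟩, ?_⟩
  · intro i
    by_cases h : i ≤ l
    · simp only [if_pos h]
      exact (hanc i h).1
    · simp only [if_neg h]
      have h2 := (hchain (i - l)).1
      have h3 : l + (i - l) = i := by omega
      rwa [h3] at h2
  · intro i
    by_cases h : i + 1 ≤ l
    · simp only [if_pos h, if_pos (by omega : i ≤ l)]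
      obtain ⟨P, hP, hPc⟩ := exists_parentC (hanc (i + 1) h).1
      have hPR : DescC A w P R := Relation.ReflTransGen.head hPc (hanc (i + 1) h).2
      have : P = anc i := anc_unique hP (hanc i (by omega)).1 hR hPR (hanc i (by omega)).2
      rwa [← this]
    · by_cases h' : i ≤ l
      · have : i = l := by omega
        subst this
        simp only [if_pos le_rfl, if_neg h, hancl]
        have : i + 1 - i = 1 := by omega
        rw [this, ← h0]
        exact (hchain 0).2
      · simp only [if_neg h, if_neg h']
        have h2 := (hchain (i - l)).2
        have e1 : i - l + 1 = i + 1 - l := by omega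
        rwa [e1] at h2
  · intro k
    by_cases h : l + k ≤ l
    · have : k = 0 := by omega
      subst this
      simp only [if_pos h, h0]
      simpa using hancl
    · simp only [if_neg h]
      have h3 : l + k - l = k := by omega
      rw [h3]


/-! ### The (⇐) direction -/

theorem infinite_unbounded {S : Set ℕ} (h : S.Infinite) : ∀ n, ∃ j ∈ S, n ≤ j := by
  intro n
  obtain ⟨j, hj⟩ := (h.diff (Set.finite_Iic n)).nonempty
  exact ⟨j, hj.1, le_of_lt (by simpa using hj.2)⟩

include hgl in
theorem bwd_dir {m : ℕ} (hio : {i | SuccessfulAt A w gl m i}.Infinite) :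
    TreeAccepting A w := by
  classical
  by_contra hTA
  -- presence is unbounded
  have hpres : ∀ n, ∃ j, n ≤ j ∧ Pres A w gl m j := by
    intro n
    obtain ⟨i, hiS, hni⟩ := infinite_unbounded hio n
    obtain ⟨-, U, U', hU, hU', hg, hg', -⟩ := hiS
    exact ⟨i, hni, U', hU', hg'⟩
  obtain ⟨j₁, -, hp₁⟩ := hpres 0
  obtain ⟨F, l, hF⟩ := first_exists ⟨j₁, hp₁⟩
  -- F is live
  have hFlive : LiveAt A w F l := by
    refine ⟨hF.1, fun j hj => ?_⟩
    obtain ⟨j₂, hj₂, C₂, hC₂, hglC₂⟩ := hpres j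
    have hlmd : IsLmd A w gl m j₂ C₂ := hglC₂ ▸ spec_lmd hgl hC₂
    obtain ⟨hdesc, -⟩ := lmd_min_prop hF hlmd
    have hlj₂ : l ≤ j₂ := by
      obtain ⟨j3, h3, hC3, -⟩ := descC_take hdesc hF.1
      have := level_unique hC3 hC₂
      omega
    obtain ⟨D, hD, hFD, -⟩ := desc_mid hF.1 hC₂ hdesc hj hj₂
    exact ⟨D, hD, hFD⟩
  -- leftmost live branch
  obtain ⟨γ, hγ0, hγ⟩ := leftmost_branch hFlive
  obtain ⟨b, hb, hbγ⟩ := full_branch hF.1 hγ0 (fun k => ⟨(hγ k).1.1, (hγ k).2.1⟩)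
  -- it is not accepting
  rw [TreeAccepting] at hTA
  push_neg at hTA
  obtain ⟨n₀, hn₀⟩ := hTA b hb
  -- descendants of F are eventually not smaller than γ
  have hγdesc : ∀ k k', k ≤ k' → DescC A w (γ k) (γ k') :=
    fun k k' h => branch_desc (fun k => (hγ k).2.1) h
  have hγcl : ∀ k, ClassAt A w (γ k) (l + k) := fun k => (hγ k).1.1
  -- collect dead small classes
  set S : Set (Set (Q × ℕ) × ℕ) :=
    {p | p.2 ≤ n₀ + l + 1 ∧ ClassAt A w p.1 p.2 ∧ ¬ LiveAt A w p.1 p.2} with hS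
  have hSfin : S.Finite := by
    apply Set.Finite.subset (Set.Finite.biUnion (Set.finite_Iic (n₀ + l + 1))
      (fun d _ => Set.Finite.prod (classesAt_finite d) (Set.finite_singleton d)))
    rintro ⟨X, d⟩ ⟨h1, h2, -⟩
    exact Set.mem_biUnion h1 ⟨h2, rfl⟩
  have hbd : ∀ p : Set (Q × ℕ) × ℕ, ∃ nX, p ∈ S →
      ∀ j, nX ≤ j → ∀ E, ClassAt A w E j → ¬ DescC A w p.1 E := by
    intro p
    by_cases hp : p ∈ S
    · obtain ⟨n, hn⟩ := dead_bound hp.2.1 hp.2.2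
      exact ⟨n, fun _ => hn⟩
    · exact ⟨0, fun h => absurd h hp⟩
  choose bnd hbnd using hbd
  obtain ⟨J₀, hJ₀⟩ := (hSfin.image bnd).bddAbove
  -- the key claim : beyond J, γ is minimal among descendants of F
  set J : ℕ := J₀ + l + n₀ + 2 with hJdef
  have hkey : ∀ j, J ≤ j → ∀ D, ClassAt A w D j → DescC A w F D →
      prf A w (γ (j - l)) ≤ prf A w D := by
    intro j hj D hD hFD
    by_contra hc
    push_neg at hc
    have hγj : ClassAt A w (γ (j - l)) j := by
      have := hγcl (j - l)
      have he : l + (j - l) = j := by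
        have : l ≤ j₁ → True := fun _ => trivial
        -- need l ≤ j
        have hlj : l ≤ j := by
          obtain ⟨j3, h3, hC3, -⟩ := descC_take hFD hF.1
          have := level_unique hC3 hD
          omega
        omega
      rwa [he] at this
    have hlj : l ≤ j := by
      obtain ⟨j3, h3, hC3, -⟩ := descC_take hFD hF.1
      have := level_unique hC3 hD
      omega
    -- diverge
    have hlen : (prf A w D).length = (prf A w (γ (j - l))).length := by
      rw [prf_length hD, prf_length hγj]
    obtain ⟨d, P, a, c, hd1, htake, hta, htc, hac⟩ := lex_diverge hc hlen
    have hdj : d ≤ j := by have := prf_length hD; omega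
    -- the prefix of each at level l is prf F
    have hFD' : prf A w F = (prf A w D).take (l + 1) := by
      obtain ⟨j3, h3, hC3, hp3⟩ := descC_take hFD hF.1
      have : j3 = j := level_unique hC3 hD
      exact hp3
    have hFγ : prf A w F = (prf A w (γ (j - l))).take (l + 1) := by
      have hdesc : DescC A w F (γ (j - l)) := hγ0 ▸ hγdesc 0 (j - l) (by omega)
      obtain ⟨j3, h3, hC3, hp3⟩ := descC_take hdesc hF.1
      exact hp3
    -- divergence is strictly after level l
    have hdl : l < d := by
      by_contra hdl
      push_neg at hdl
      have e1 : (prf A w D).take (d + 1) = (prf A w (γ (j - l))).take (d + 1) := by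
        have q1 : (prf A w D).take (d+1) = ((prf A w D).take (l+1)).take (d+1) := by
          rw [List.take_take]
          congr 1
          omega
        have q2 : (prf A w (γ (j - l))).take (d+1) =
            ((prf A w (γ (j - l))).take (l+1)).take (d+1) := by
          rw [List.take_take]
          congr 1
          omega
        rw [q1, q2, ← hFD', ← hFγ]
      rw [hta, htc] at e1
      have : a = c := by
        have := congrArg (fun l => l.getLast?) e1
        simpa using this
      omega
    -- the ancestor X of D at level d
    obtain ⟨X, hX, hXD⟩ := anc_exists j hD hdj
    have hXp : prf A w X = (prf A w D).take (d + 1) := by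
      obtain ⟨j3, h3, hC3, hp3⟩ := descC_take hXD hX
      have : j3 = j := level_unique hC3 hD
      exact hp3
    -- the ancestor of γ (j-l) at level d is γ (d - l)
    have hγdp : prf A w (γ (d - l)) = (prf A w (γ (j - l))).take (d + 1) := by
      have hdesc : DescC A w (γ (d - l)) (γ (j - l)) := hγdesc (d - l) (j - l) (by omega)
      
      obtain ⟨j3, h3, hC3, hp3⟩ := descC_take hdesc (by
        have := hγcl (d - l)
        have he : l + (d - l) = d := by omega
        rwa [he] at this)
      exact hp3
    have hγd : ClassAt A w (γ (d - l)) d := by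
      have := hγcl (d - l)
      have he : l + (d - l) = d := by omega
      rwa [he] at this
    -- X ≠ γ (d - l), X child of γ (d - 1 - l), prf X < prf (γ (d-l))
    have hXlt : prf A w X < prf A w (γ (d - l)) := by
      rw [hXp, hγdp, hta, htc]
      exact lex_append_last hac
    -- parent of X is γ (d - 1 - l)
    obtain ⟨X', hX'⟩ : ∃ X', ClassAt A w X' (d - 1) ∧ childC A w X' X := by
      have hd' : d = (d - 1) + 1 := by omega
      obtain ⟨P', h1, h2⟩ := exists_parentC (hd' ▸ hX)
      exact ⟨P', h1, h2⟩
    have hX'γ : X' = γ (d - 1 - l) := by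
      have hγd1 : ClassAt A w (γ (d - 1 - l)) (d - 1) := by
        have := hγcl (d - 1 - l)
        have he : l + (d - 1 - l) = d - 1 := by omega
        rwa [he] at this
      apply class_eq_of_prf_eq hX'.1 hγd1
      have e1 : prf A w X' = (prf A w X).dropLast := by
        have hd' : d - 1 + 1 = d := by omega
        have := (childC_iff hX'.1 (by rwa [← hd'] at hX)).mp hX'.2
        exact this.2
      have e2 : prf A w (γ (d - 1 - l)) = (prf A w (γ (d - l))).dropLast := by
        have hchild : childC A w (γ (d - 1 - l)) (γ (d - 1 - l + 1)) := (hγ (d - 1 - l)).2.1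
        have he2 : d - 1 - l + 1 = d - l := by omega
        rw [he2] at hchild
        have hγd1 : ClassAt A w (γ (d - 1 - l)) (d - 1) := by
          have := hγcl (d - 1 - l)
          have he : l + (d - 1 - l) = d - 1 := by omega
          rwa [he] at this
        have hd' : d - 1 + 1 = d := by omega
        have := (childC_iff hγd1 (by rwa [← hd'] at hγd)).mp hchild
        exact this.2
      rw [e1, e2, hXp, hγdp, hta, htc]
      simp
    -- γ (d - l) is an F-class
    have hcF : IsFClass A (γ (d - l)) := by
      obtain ⟨L, bb, hLb, hiff⟩ := prf_ends hγd
      have : bb = c := by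
        have e1 : L ++ [bb] = P ++ [c] := by rw [← hLb, hγdp, htc]
        have := congrArg (fun l => l.getLast?) e1
        simpa using this
      apply hiff.mpr
      rw [this]
      have hcbit : c = 0 ∨ c = 1 := by
        apply prf_bits hγd
        rw [hγdp, htc]
        simp
      omega
    -- so d < n₀
    have hdn₀ : d < n₀ := by
      by_contra hdn
      push_neg at hdn
      have : γ (d - l) = b d := by
        have := hbγ (d - l)
        have he : l + (d - l) = d := by omega
        rw [he] at this
        exact this.symm
      exact hn₀ d (by omega) (this ▸ hcF)
    -- X is not live
    have hXdead : ¬ LiveAt A w X d := by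
      intro hlive
      have := (hγ (d - 1 - l)).2.2 X (by
          have he : l + (d - 1 - l) + 1 = d := by omega
          rwa [he]) (hX'γ ▸ hX'.2) (by
          have he : l + (d - 1 - l) + 1 = d := by omega
          rwa [he])
      have he2 : d - 1 - l + 1 = d - l := by omega
      rw [he2] at this
      exact absurd hXlt (not_lt_of_ge this)
    -- contradiction with deadness bound
    have hmemS : (X, d) ∈ S := ⟨(by omega : d ≤ n₀ + l + 1), hX, hXdead⟩
    have hble : bnd (X, d) ≤ J₀ := hJ₀ (Set.mem_image_of_mem bnd hmemS)
    exact hbnd (X, d) hmemS j (by omega) D hD hXD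
  -- now take a success beyond all bounds
  obtain ⟨i, hiS, hni⟩ := infinite_unbounded hio (J + l + n₀ + 2)
  obtain ⟨hipos, U, U', hU, hU', hg, hg', hdisj⟩ := hiS
  have hUlmd : IsLmd A w gl m (i - 1) U := hg ▸ spec_lmd hgl hU
  have hU'lmd : IsLmd A w gl m i U' := hg' ▸ spec_lmd hgl hU'
  have hUeq : U = γ (i - 1 - l) := by
    obtain ⟨hdesc, hmin⟩ := lmd_min_prop hF hUlmd
    have hγcl' : ClassAt A w (γ (i - 1 - l)) (i - 1) := by
      have := hγcl (i - 1 - l)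
      have he : l + (i - 1 - l) = i - 1 := by omega
      rwa [he] at this
    have h1 : prf A w U ≤ prf A w (γ (i - 1 - l)) := by
      apply hmin _ hγcl'
      have := hγdesc 0 (i - 1 - l) (by omega)
      rwa [hγ0] at this
    have h2 : prf A w (γ (i - 1 - l)) ≤ prf A w U := hkey (i - 1) (by omega) U hU hdesc
    exact class_eq_of_prf_eq hU hγcl' (le_antisymm h1 h2)
  have hU'eq : U' = γ (i - l) := by
    obtain ⟨hdesc, hmin⟩ := lmd_min_prop hF hU'lmd
    have hγcl' : ClassAt A w (γ (i - l)) i := by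
      have := hγcl (i - l)
      have he : l + (i - l) = i := by omega
      rwa [he] at this
    have h1 : prf A w U' ≤ prf A w (γ (i - l)) := by
      apply hmin _ hγcl'
      have := hγdesc 0 (i - l) (by omega)
      rwa [hγ0] at this
    have h2 : prf A w (γ (i - l)) ≤ prf A w U' := hkey i (by omega) U' hU' hdesc
    exact class_eq_of_prf_eq hU' hγcl' (le_antisymm h1 h2)
  have hchild : childC A w U U' := by
    rw [hUeq, hU'eq]
    have := (hγ (i - 1 - l)).2.1
    have he : i - 1 - l + 1 = i - l := by omega
    rwa [he] at this
  rcases hdisj with ⟨-, hFc⟩ | hnc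
  · -- U' is an F-class, but b i is not
    have : γ (i - l) = b i := by
      have := hbγ (i - l)
      have he : l + (i - l) = i := by omega
      rw [he] at this
      exact this.symm
    exact hn₀ i (by omega) (this ▸ hU'eq ▸ hFc)
  · exact hnc hchild


/-! ### Isolation of a branch -/

omit hgl

theorem eq_classOf_of_mem {C : Set (Q × ℕ)} {i : ℕ} (hC : ClassAt A w C i) {v : Q × ℕ}
    (hv : v ∈ C) : C = classOf A w v := by
  obtain ⟨u, hu, hl, hCu, -⟩ := classAt_elim hC
  rw [hCu]
  rw [hCu] at hv
  exact (classOf_eq_classOf hv.1 hv.2.1 hv.2.2).symm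

theorem classes_card {n : ℕ} (e : Fin (Fintype.card Q + 1) → Set (Q × ℕ))
    (he : ∀ k, ClassAt A w (e k) n) : ¬ Function.Injective e := by
  classical
  intro hinj
  have hne : ∀ k, (e k).Nonempty := fun k => classAt_nonempty (he k)
  set φ : Fin (Fintype.card Q + 1) → Q := fun k => ((hne k).some).1 with hφ
  obtain ⟨k, k', hkk', hφeq⟩ := Fintype.exists_ne_map_eq_of_card_lt φ (by simp)
  apply hkk'
  apply hinj
  have h1 := eq_classOf_of_mem (he k) (hne k).some_mem
  have h2 := eq_classOf_of_mem (he k') (hne k').some_mem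
  have hlev1 : ((hne k).some).2 = n := (mem_of_classAt (he k) (hne k).some_mem).2.1
  have hlev2 : ((hne k').some).2 = n := (mem_of_classAt (he k') (hne k').some_mem).2.1
  have heq : (hne k).some = (hne k').some := by
    have h3 : φ k = φ k' := hφeq
    rw [hφ] at h3
    exact Prod.ext h3 (by rw [hlev1, hlev2])
  rw [h1, h2, heq]

theorem iso {b : ℕ → Set (Q × ℕ)} (hb : IsBranch A w b) :
    ∃ ℓ₀, ∀ ℓ, ℓ₀ ≤ ℓ → ∀ j, ℓ ≤ j → ∀ D, ClassAt A w D j → LiveAt A w D j →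
      DescC A w (b ℓ) D → D = b j := by
  classical
  by_contra hcon
  push_neg at hcon
  have hstep : ∀ n, ∃ p : ℕ × Set (Q × ℕ), n ≤ p.1 ∧ ClassAt A w p.2 p.1 ∧
      LiveAt A w p.2 p.1 ∧ (∃ ℓ, n ≤ ℓ ∧ ℓ ≤ p.1 ∧ DescC A w (b ℓ) p.2) ∧ p.2 ≠ b p.1 := by
    intro n
    obtain ⟨ℓ, hℓ, j, hj, D, hD, hlive, hdesc, hne⟩ := hcon n
    exact ⟨(j, D), by omega, hD, hlive, ⟨ℓ, hℓ, hj, hdesc⟩, hne⟩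
  choose G hG using hstep
  set sq : ℕ → ℕ × Set (Q × ℕ) := fun k => Nat.rec (G 0) (fun _ p => G (p.1 + 1)) k with hsq
  have hsqs : ∀ k, sq (k + 1) = G ((sq k).1 + 1) := fun k => rfl
  have hprop : ∀ k, ClassAt A w (sq k).2 (sq k).1 ∧ LiveAt A w (sq k).2 (sq k).1 ∧
      (sq k).2 ≠ b (sq k).1 := by
    intro k
    cases k with
    | zero => exact ⟨(hG 0).2.1, (hG 0).2.2.1, (hG 0).2.2.2.2⟩
    | succ k => exact ⟨(hG _).2.1, (hG _).2.2.1, (hG _).2.2.2.2⟩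
  have hmono : ∀ k, (sq k).1 < (sq (k + 1)).1 := by
    intro k
    rw [hsqs]
    have := (hG ((sq k).1 + 1)).1
    omega
  have hmono' : ∀ k k', k < k' → (sq k).1 < (sq k').1 := by
    intro k k' h
    induction k' with
    | zero => omega
    | succ k' ih =>
        rcases Nat.lt_succ_iff_lt_or_eq.mp h with h | rfl
        · exact lt_trans (ih h) (hmono k')
        · exact hmono k
  set K := Fintype.card Q with hK
  set n := (sq K).1 + 1 with hn
  have hjn : ∀ k : Fin (K + 1), (sq k.1).1 < n := by
    intro k
    rcases Nat.lt_succ_iff_lt_or_eq.mp k.2 with h | h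
    · have := hmono' k.1 K h
      omega
    · rw [h]
      omega
  have hEx : ∀ k : Fin (K + 1), ∃ E, ClassAt A w E n ∧ DescC A w (sq k.1).2 E := by
    intro k
    obtain ⟨E, hE, hdesc⟩ := (hprop k.1).2.1.2 n (le_of_lt (hjn k))
    exact ⟨E, hE, hdesc⟩
  choose e he using hEx
  apply classes_card e (fun k => (he k).1)
  intro k k' hekk'
  by_contra hne
  -- wlog k < k'
  have main : ∀ k k' : Fin (K + 1), k.1 < k'.1 → e k = e k' → False := by
    intro k k' hlt heq
    -- ancestor of e k at level (sq k).1 is (sq k).2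
    have h1 : DescC A w (sq k.1).2 (e k) := (he k).2
    -- ancestor of e k' at that level is b (sq k).1
    have h2 : DescC A w (b (sq k.1).1) (e k') := by
      have hk'pos : k'.1 = (k'.1 - 1) + 1 := by omega
      have hstep' := hsqs (k'.1 - 1)
      rw [← hk'pos] at hstep'
      have hGp := hG ((sq (k'.1 - 1)).1 + 1)
      obtain ⟨ℓ, hℓ1, hℓ2, hdesc⟩ := hGp.2.2.2.1
      rw [← hstep'] at hdesc
      have hkk1 : (sq k.1).1 ≤ (sq (k'.1 - 1)).1 := by
        rcases Nat.eq_or_lt_of_le (Nat.le_sub_one_of_lt hlt) with h | h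
        · rw [h]
        · exact le_of_lt (hmono' _ _ h)
      have hbdesc : DescC A w (b (sq k.1).1) (b ℓ) := branch_desc hb.2 (by omega)
      exact Relation.ReflTransGen.trans (Relation.ReflTransGen.trans hbdesc hdesc) (he k').2
    have h3 : (sq k.1).2 = b (sq k.1).1 := by
      apply anc_unique (hprop k.1).1 (hb.1 (sq k.1).1) (he k).1 h1
      rw [heq]
      exact h2
    exact (hprop k.1).2.2 h3
  rcases lt_trichotomy k.1 k'.1 with h | h | h
  · exact main k k' h hekk'
  · exact hne (Fin.ext h)
  · exact main k' k h hekk'.symm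

/-! ### Stabilisation of labels (main induction) -/

variable (A w) in
/-- the "stable package" for label `m` at level `j`. -/
def Pack (gl : Set (Q × ℕ) → ℕ) (m j : ℕ) : Prop :=
  ∃ C D, IsLmd A w gl m j C ∧ gl C = m ∧ IsLmd A w gl m (j + 1) D ∧ gl D = m ∧
    childC A w C D ∧ ¬ IsFClass A D

include hgl in
theorem least_child_of_lmd {m l i : ℕ} {Fm C D : Set (Q × ℕ)} (hF : IsFirst A w gl m Fm l)
    (hC : IsLmd A w gl m i C) (hD : ClassAt A w D (i + 1)) (hchild : childC A w C D)
    (hlmdD : IsLmd A w gl m (i + 1) D) :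
    ∀ D', ClassAt A w D' (i + 1) → childC A w C D' → prf A w D ≤ prf A w D' := by
  obtain ⟨L, hL, hLchild, hLmin⟩ := least_child_exists ⟨D, hD, hchild⟩
  have hlmdL : IsLmd A w gl m (i + 1) L := lmd_step hF hC hL hLchild hLmin
  have : L = D := lmd_unique hlmdL hlmdD
  exact this ▸ hLmin

include hgl in
theorem stab_main (hns : ∀ m', {i | SuccessfulAt A w gl m' i}.Finite) (m : ℕ) :
    {j | Pres A w gl m j}.Infinite → ∃ J, ∀ j, J ≤ j → Pack A w gl m j := by
  induction m using Nat.strong_induction_on with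
  | _ m IH =>
  intro hio
  -- the first class of label m
  obtain ⟨j₁, hj₁⟩ := hio.nonempty
  obtain ⟨F, l, hF⟩ := first_exists ⟨j₁, hj₁⟩
  -- thresholds for smaller labels
  have hu : ∀ u, ∃ bu, u < m → ∀ j, bu ≤ j →
      (Pres A w gl u j ∨ Pres A w gl u (j + 1)) → Pack A w gl u j := by
    intro u
    by_cases hum : u < m
    · by_cases hinf : {j | Pres A w gl u j}.Infinite
      · obtain ⟨J, hJ⟩ := IH u hum hinf
        exact ⟨J, fun _ j hj _ => hJ j hj⟩
      · obtain ⟨B, hB⟩ := (Set.not_infinite.mp hinf).bddAbove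
        refine ⟨B + 2, fun _ j hj hp => ?_⟩
        exfalso
        rcases hp with hp | hp
        · have := hB hp
          omega
        · have := hB hp
          omega
    · exact ⟨0, fun h => absurd h hum⟩
  choose ubnd hubnd using hu
  obtain ⟨B₂, hB₂⟩ := (hns m).bddAbove
  set J : ℕ := max ((Finset.range m).sup ubnd) B₂ + 1 with hJdef
  have hJ₁prop : ∀ u, u < m → ∀ j, J ≤ j →
      (Pres A w gl u j ∨ Pres A w gl u (j + 1)) → Pack A w gl u j := by
    intro u hum j hj hp
    apply hubnd u hum j _ hp
    have : ubnd u ≤ (Finset.range m).sup ubnd := Finset.le_sup (Finset.mem_range.mpr hum)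
    omega
  have hJB₂ : ∀ i, SuccessfulAt A w gl m i → i ≤ B₂ := fun i hi => hB₂ hi
  -- the main step
  have step : ∀ j, J ≤ j → Pres A w gl m j → Pack A w gl m j := by
    intro j hj ⟨C, hC, hglC⟩
    have hlmdC : IsLmd A w gl m j C := hglC ▸ spec_lmd hgl hC
    have hlj : l ≤ j := by
      obtain ⟨hdesc, -⟩ := lmd_min_prop hF hlmdC
      obtain ⟨j3, h3, hC3, -⟩ := descC_take hdesc hF.1
      have := level_unique hC3 hC
      omega
    -- the subtree of F is alive at level j+1
    have halive : ∃ E, ClassAt A w E (j + 1) ∧ DescC A w F E := by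
      obtain ⟨j₂, hj₂mem, hj₂ge⟩ := infinite_unbounded hio (j + 1)
      obtain ⟨C₂, hC₂, hglC₂⟩ := hj₂mem
      have hlmd₂ : IsLmd A w gl m j₂ C₂ := hglC₂ ▸ spec_lmd hgl hC₂
      obtain ⟨hdesc₂, -⟩ := lmd_min_prop hF hlmd₂
      obtain ⟨E, hE, hFE, -⟩ := desc_mid hF.1 hC₂ hdesc₂ (by omega) hj₂ge
      exact ⟨E, hE, hFE⟩
    obtain ⟨D, hlmdD⟩ := lmd_exists hF halive
    have hDc : ClassAt A w D (j + 1) := hlmdD.1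
    have hglD_le : gl D ≤ m := spec_min hgl hDc hlmdD
    by_cases hch : ∃ D', ClassAt A w D' (j + 1) ∧ childC A w C D'
    · -- C has children; D is the least child
      obtain ⟨L, hL, hLchild, hLmin⟩ := least_child_exists hch
      have hlmdL : IsLmd A w gl m (j + 1) L := lmd_step hF hlmdC hL hLchild hLmin
      have hLD : L = D := lmd_unique hlmdL hlmdD
      have hchildCD : childC A w C D := hLD ▸ hLchild
      have hglD : gl D = m := by
        by_contra hne
        have hum : gl D < m := lt_of_le_of_ne hglD_le hne
        obtain ⟨Cu, Du, hlmdCu, hglCu, hlmdDu, hglDu, hchildu, -⟩ :=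
          hJ₁prop (gl D) hum j hj (Or.inr ⟨D, hDc, rfl⟩)
        have hDuD : Du = D := lmd_unique hlmdDu (spec_lmd hgl hDc)
        rw [hDuD] at hchildu
        have hCuC : Cu = C := parent_unique hlmdCu.1 hC hDc hchildu hchildCD
        rw [hCuC] at hglCu
        omega
      have hnF : ¬ IsFClass A D := by
        intro hFD
        have hsucc : SuccessfulAt A w gl m (j + 1) :=
          ⟨by omega, C, D, hC, hDc, hglC, hglD, Or.inl ⟨hchildCD, hFD⟩⟩
        have := hJB₂ _ hsucc
        omega
      exact ⟨C, D, hlmdC, hglC, hlmdD, hglD, hchildCD, hnF⟩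
    · -- C has no children: the label would die, contradicting infinitely many occurrences
      exfalso
      have hglDne : gl D ≠ m := by
        intro he
        have hsucc : SuccessfulAt A w gl m (j + 1) :=
          ⟨by omega, C, D, hC, hDc, hglC, he, Or.inr (fun hcc => hch ⟨D, hDc, hcc⟩)⟩
        have := hJB₂ _ hsucc
        omega
      have hum : gl D < m := lt_of_le_of_ne hglD_le hglDne
      -- from now on, lmd(m, ·) coincides with the trajectory of u := gl D
      have hinv : ∀ k, ∃ E, IsLmd A w gl m (j + 1 + k) E ∧ gl E = gl D := by
        intro k
        induction k with
        | zero => exact ⟨D, hlmdD, rfl⟩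
        | succ k ih =>
            obtain ⟨E, hlmdE, hglE⟩ := ih
            obtain ⟨Cu, Du, hlmdCu, hglCu, hlmdDu, hglDu, hchildu, -⟩ :=
              hJ₁prop (gl D) hum (j + 1 + k) (by omega) (Or.inl ⟨E, hlmdE.1, hglE⟩)
            have hCuE : Cu = E := lmd_unique hlmdCu (hglE ▸ spec_lmd hgl hlmdE.1)
            rw [hCuE] at hchildu
            obtain ⟨Fu, lu, hFu, -⟩ := hlmdDu.2.1
            have hleast := least_child_of_lmd hgl hFu (hCuE ▸ hlmdCu) hlmdDu.1 hchildu hlmdDu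
            have hres : IsLmd A w gl m (j + 1 + k + 1) Du :=
              lmd_step hF hlmdE hlmdDu.1 hchildu hleast
            have he : j + 1 + (k + 1) = j + 1 + k + 1 := by omega
            rw [he]
            exact ⟨Du, hres, hglDu⟩
      -- but m occurs beyond j
      obtain ⟨j₃, hj₃mem, hj₃ge⟩ := infinite_unbounded hio (j + 1)
      obtain ⟨C₃, hC₃, hglC₃⟩ := hj₃mem
      obtain ⟨E, hlmdE, hglE⟩ := hinv (j₃ - (j + 1))
      have he : j + 1 + (j₃ - (j + 1)) = j₃ := by omega
      rw [he] at hlmdE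
      have : C₃ = E := lmd_unique (hglC₃ ▸ spec_lmd hgl hC₃) hlmdE
      rw [this] at hglC₃
      omega
  -- presence propagates forward from some point
  obtain ⟨j₀, hj₀mem, hj₀ge⟩ := infinite_unbounded hio J
  have hchain : ∀ k, Pres A w gl m (j₀ + k) := by
    intro k
    induction k with
    | zero => exact hj₀mem
    | succ k ih =>
        obtain ⟨-, D, -, -, hlmdD, hglD, -, -⟩ := step (j₀ + k) (by omega) ih
        exact ⟨D, hlmdD.1, hglD⟩
  refine ⟨j₀, fun j hj => ?_⟩
  have : Pres A w gl m j := by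
    have := hchain (j - j₀)
    have he : j₀ + (j - j₀) = j := by omega
    rwa [he] at this
  exact step j (by omega) this


include hgl in
theorem fwd_dir (hTA : TreeAccepting A w)
    (hns : ∀ m', {i | SuccessfulAt A w gl m' i}.Finite) : False := by
  classical
  obtain ⟨b, hb, hbF⟩ := hTA
  obtain ⟨ℓ₀, hiso⟩ := iso hb
  set RBset : Set ℕ :=
    {j | ∃ c, ClassAt A w c (j + 1) ∧ childC A w (b j) c ∧ prf A w c < prf A w (b (j + 1))}
    with hRBdef
  by_cases hRB : RBset.Infinite
  · -- infinitely many right-births along b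
    obtain ⟨ℓ, hℓmem, hℓge⟩ := infinite_unbounded hRB ℓ₀
    obtain ⟨c, hc, hcchild, hclt⟩ := hℓmem
    have hRc : ClassAt A w (b (ℓ + 1)) (ℓ + 1) := hb.1 _
    have hlmdR : IsLmd A w gl (gl (b (ℓ + 1))) (ℓ + 1) (b (ℓ + 1)) := spec_lmd hgl hRc
    have hfirstR : IsFirst A w gl (gl (b (ℓ + 1))) (b (ℓ + 1)) (ℓ + 1) := by
      obtain ⟨F', l', hF', hdesc⟩ := hlmdR.2.1
      have hl' : l' ≤ ℓ + 1 := by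
        obtain ⟨j3, h3, hC3, -⟩ := descC_take hdesc hF'.1
        have := level_unique hC3 hRc
        omega
      rcases Nat.eq_or_lt_of_le hl' with heq | hlt
      · subst heq
        have he : F' = b (ℓ + 1) := descC_self_level hF'.1 hRc hdesc
        rw [he] at hF'
        exact hF'
      · exfalso
        have hF'b : F' = b l' :=
          anc_unique hF'.1 (hb.1 l') hRc hdesc (branch_desc hb.2 (by omega))
        have hmin := (lmd_min_prop hF' hlmdR).2
        have hcdesc : DescC A w F' c := by
          rw [hF'b]
          exact Relation.ReflTransGen.tail (branch_desc hb.2 (show l' ≤ ℓ by omega)) hcchild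
        exact absurd hclt (not_lt_of_ge (hmin c hc hcdesc))
    -- minima of the subtree of b (ℓ+1)
    have hMex : ∀ j, ∃ Mj, ℓ + 1 ≤ j → IsLmd A w gl (gl (b (ℓ + 1))) j Mj := by
      intro j
      by_cases hj : ℓ + 1 ≤ j
      · obtain ⟨Mj, hMj⟩ := lmd_exists hfirstR ⟨b j, hb.1 j, branch_desc hb.2 hj⟩
        exact ⟨Mj, fun _ => hMj⟩
      · exact ⟨∅, fun h => absurd h hj⟩
    choose M hM using hMex
    have hMle : ∀ j, ℓ + 1 ≤ j → gl (M j) ≤ gl (b (ℓ + 1)) :=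
      fun j hj => spec_min hgl (hM j hj).1 (hM j hj)
    have hfib : ∃ v, v ≤ gl (b (ℓ + 1)) ∧ {j | ℓ + 1 ≤ j ∧ gl (M j) = v}.Infinite := by
      by_contra hcon
      push_neg at hcon
      have hsub : Set.Ici (ℓ + 1) ⊆
          ⋃ v ∈ Set.Iic (gl (b (ℓ + 1))), {j | ℓ + 1 ≤ j ∧ gl (M j) = v} := by
        intro j hj
        exact Set.mem_biUnion (hMle j hj) ⟨hj, rfl⟩
      have hfin : (⋃ v ∈ Set.Iic (gl (b (ℓ + 1))), {j | ℓ + 1 ≤ j ∧ gl (M j) = v}).Finite :=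
        Set.Finite.biUnion (Set.finite_Iic _)
          (fun v hv => hcon v hv)
      exact Set.Ici_infinite (ℓ + 1) (hfin.subset hsub)
    obtain ⟨v, hvle, hvfib⟩ := hfib
    have hvio : {j | Pres A w gl v j}.Infinite :=
      hvfib.mono (fun j hj => ⟨M j, (hM j hj.1).1, hj.2⟩)
    obtain ⟨J_v, hJv⟩ := stab_main hgl hns v hvio
    -- the stabilised trajectory of v
    have hYex : ∀ j, ∃ CD : Set (Q × ℕ) × Set (Q × ℕ), J_v ≤ j →
        (IsLmd A w gl v j CD.1 ∧ gl CD.1 = v ∧ IsLmd A w gl v (j + 1) CD.2 ∧ gl CD.2 = v ∧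
          childC A w CD.1 CD.2 ∧ ¬ IsFClass A CD.2) := by
      intro j
      by_cases hj : J_v ≤ j
      · obtain ⟨C, D, h1, h2, h3, h4, h5, h6⟩ := hJv j hj
        exact ⟨(C, D), fun _ => ⟨h1, h2, h3, h4, h5, h6⟩⟩
      · exact ⟨(∅, ∅), fun h => absurd h hj⟩
    choose P hP using hYex
    set Y : ℕ → Set (Q × ℕ) := fun j => (P j).1 with hYdef
    have hY1 : ∀ j, J_v ≤ j → IsLmd A w gl v j (Y j) := fun j hj => (hP j hj).1
    have hYsnd : ∀ j, J_v ≤ j → (P j).2 = Y (j + 1) :=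
      fun j hj => lmd_unique (hP j hj).2.2.1 (hY1 (j + 1) (by omega))
    have hYchild : ∀ j, J_v ≤ j → childC A w (Y j) (Y (j + 1)) := by
      intro j hj
      have := (hP j hj).2.2.2.2.1
      rwa [hYsnd j hj] at this
    have hYnF : ∀ j, J_v ≤ j → ¬ IsFClass A (Y (j + 1)) := by
      intro j hj
      have := (hP j hj).2.2.2.2.2
      rwa [hYsnd j hj] at this
    have hYdesc : ∀ j j', J_v ≤ j → j ≤ j' → DescC A w (Y j) (Y j') := by
      intro j j' hj hjj
      have hch : ∀ k, childC A w ((fun k => Y (J_v + k)) k) ((fun k => Y (J_v + k)) (k + 1)) := by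
        intro k
        have := hYchild (J_v + k) (by omega)
        have he : J_v + k + 1 = J_v + (k + 1) := by omega
        rwa [he] at this
      have := branch_desc hch (show j - J_v ≤ j' - J_v by omega)
      have e1 : J_v + (j - J_v) = j := by omega
      have e2 : J_v + (j' - J_v) = j' := by omega
      simp only [e1, e2] at this
      exact this
    have hYlive : ∀ j, J_v ≤ j → LiveAt A w (Y j) j := by
      intro j hj
      refine ⟨(hY1 j hj).1, fun j' hj' => ⟨Y j', (hY1 j' (by omega)).1, hYdesc j j' hj hj'⟩⟩
    -- agreement of Y with b on the fibre
    have hagree : ∀ j, max J_v (ℓ + 1) ≤ j → gl (M j) = v → Y j = b j := by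
      intro j hj hgMj
      have hj1 : ℓ + 1 ≤ j := le_trans (le_max_right _ _) hj
      have hjv : J_v ≤ j := le_trans (le_max_left _ _) hj
      have hMY : M j = Y j :=
        lmd_unique (hgMj ▸ spec_lmd hgl (hM j hj1).1) (hY1 j hjv)
      have hdesc : DescC A w (b (ℓ + 1)) (M j) := (lmd_min_prop hfirstR (hM j hj1)).1
      exact hiso (ℓ + 1) (by omega) j hj1 (Y j) (hY1 j hjv).1 (hYlive j hjv) (hMY ▸ hdesc)
    obtain ⟨i, hige, hiF⟩ := hbF (max J_v (ℓ + 1) + 2)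
    obtain ⟨j₂, hj₂mem, hj₂ge⟩ := infinite_unbounded hvfib i
    have hagr2 : Y j₂ = b j₂ := hagree j₂ (by omega) hj₂mem.2
    have hYi : Y i = b i := by
      apply anc_unique (hY1 i (by omega)).1 (hb.1 i) (hY1 j₂ (by omega)).1
        (hYdesc i j₂ (by omega) (by omega))
      rw [hagr2]
      exact branch_desc hb.2 (by omega)
    have hnotF : ¬ IsFClass A (Y i) := by
      have := hYnF (i - 1) (by omega)
      have e : i - 1 + 1 = i := by omega
      rwa [e] at this
    exact hnotF (hYi ▸ hiF)
  · -- finitely many right-births: labels along b are eventually non-increasing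
    have hfin := Set.not_infinite.mp hRB
    obtain ⟨L, hL⟩ := hfin.bddAbove
    have hmono : ∀ j, L + 1 ≤ j → gl (b (j + 1)) ≤ gl (b j) := by
      intro j hj
      have hleast : ∀ c, ClassAt A w c (j + 1) → childC A w (b j) c →
          prf A w (b (j + 1)) ≤ prf A w c := by
        intro c h1 h2
        by_contra hlt
        push_neg at hlt
        have : j ∈ RBset := ⟨c, h1, h2, hlt⟩
        have := hL this
        omega
      have hlmd : IsLmd A w gl (gl (b j)) j (b j) := spec_lmd hgl (hb.1 j)
      obtain ⟨Fj, lj, hFj, -⟩ := hlmd.2.1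
      have := lmd_step hFj hlmd (hb.1 (j + 1)) (hb.2 j) hleast
      exact spec_min hgl (hb.1 (j + 1)) this
    set Sv : Set ℕ := {n | ∃ j, L + 1 ≤ j ∧ gl (b j) = n} with hSvdef
    have hSv : Sv.Nonempty := ⟨gl (b (L + 1)), L + 1, le_rfl, rfl⟩
    obtain ⟨j₁, hj₁ge, hj₁⟩ := Nat.sInf_mem hSv
    have hconst : ∀ k, gl (b (j₁ + k)) = sInf Sv := by
      intro k
      induction k with
      | zero => simpa using hj₁
      | succ k ih =>
          have h1 : gl (b (j₁ + k + 1)) ≤ sInf Sv := by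
            rw [← ih]
            exact hmono (j₁ + k) (by omega)
          have h2 : sInf Sv ≤ gl (b (j₁ + k + 1)) :=
            Nat.sInf_le ⟨j₁ + k + 1, by omega, rfl⟩
          have he : j₁ + (k + 1) = j₁ + k + 1 := by omega
          rw [he]
          omega
    have hconst' : ∀ j, j₁ ≤ j → gl (b j) = sInf Sv := by
      intro j hj
      have := hconst (j - j₁)
      have he : j₁ + (j - j₁) = j := by omega
      rwa [he] at this
    have hvio : {j | Pres A w gl (sInf Sv) j}.Infinite := by
      apply Set.Infinite.mono _ (Set.Ici_infinite j₁)
      intro j hj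
      exact ⟨b j, hb.1 j, hconst' j hj⟩
    obtain ⟨J_v, hJv⟩ := stab_main hgl hns (sInf Sv) hvio
    obtain ⟨i, hige, hiF⟩ := hbF (max J_v j₁ + 2)
    obtain ⟨C, D, hlmdC, hglC, hlmdD, hglD, hchild, hnF⟩ := hJv (i - 1) (by omega)
    have hDbi : D = b i := by
      have h1 : IsLmd A w gl (sInf Sv) i (b i) :=
        hconst' i (by omega) ▸ spec_lmd hgl (hb.1 i)
      have e : i - 1 + 1 = i := by omega
      rw [e] at hlmdD
      exact lmd_unique hlmdD h1
    exact hnF (hDbi ▸ hiF)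


end PT

/-- Theorem: `T` is accepting iff some label is successful
infinitely often. -/
theorem accepting_iff_label_successful_io [Fintype Alph] [Fintype Q]
    (A : NBW Alph Q) (w : ℕ → Alph) (gl : Set (Q × ℕ) → ℕ) (hgl : GlSpec A w gl) :
    TreeAccepting A w ↔ ∃ m, { i | SuccessfulAt A w gl m i }.Infinite := by
  constructor
  · intro hTA
    by_contra hcon
    push_neg at hcon
    exact PT.fwd_dir hgl hTA (fun m' => hcon m')
  · rintro ⟨m, hio⟩
    exact PT.bwd_dir hgl hio
end

section
/- For a class U on level i of the profile tree T, lmd(gl(U), i+1) = lsf_i(U); that is, the lexicographically minimal descendant of first(gl(U)) on level i+1 equals the ≼_{i+1}-minimal child of the classes W on level i with U ⋖̲_i W. -/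
variable {Alph Q : Type*} (A : NBW Alph Q) (w : ℕ → Alph)

/-- The minimal-cousin relation `U ⋖̲_i W`: both are classes on level `i` and
`W` is a descendant of `first(gl(U))`. -/
def LRrel (gl : Set (Q × ℕ) → ℕ) (i : ℕ) (U W : Set (Q × ℕ)) : Prop :=
  ClassAt A w U i ∧ ClassAt A w W i ∧ DescFirst A w gl (gl U) W

/-- `C = lsf_i(U)`: `C` is the `≼_{i+1}`-minimal element of
`{W' ∣ W' is a child of some W with U ⋖̲_i W}`. -/
def IsLsf (gl : Set (Q × ℕ) → ℕ) (i : ℕ) (U C : Set (Q × ℕ)) : Prop :=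
  (ClassAt A w C (i + 1) ∧ ∃ W, LRrel A w gl i U W ∧ childC A w W C) ∧
  ∀ D, (ClassAt A w D (i + 1) ∧ ∃ W, LRrel A w gl i U W ∧ childC A w W D) →
    profLE A w C D

lemma mem_classOf_self {u : Q × ℕ} (h : memV A w u) : u ∈ classOf A w u :=
  ⟨h, rfl, rfl⟩

lemma classAt_unique {C : Set (Q × ℕ)} {i j : ℕ}
    (hi : ClassAt A w C i) (hj : ClassAt A w C j) : i = j := by
  obtain ⟨u, hu, hui, rfl⟩ := hi
  obtain ⟨u', hu', huj, hC⟩ := hj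
  have hmem : u ∈ classOf A w u' := hC ▸ mem_classOf_self A w hu
  rw [← hui, ← huj]; exact hmem.2.1

lemma childC_levels {C D : Set (Q × ℕ)} (h : childC A w C D) :
    ∃ k, ClassAt A w C k ∧ ClassAt A w D (k + 1) := by
  obtain ⟨u, v, he, hv, rfl, rfl⟩ := h
  exact ⟨u.2, ⟨u, he.1.1, rfl, rfl⟩, ⟨v, hv, he.1.2.1, rfl⟩⟩

lemma key_set_eq (gl : Set (Q × ℕ) → ℕ) (i : ℕ) (U : Set (Q × ℕ))
    (hU : ClassAt A w U i) (D : Set (Q × ℕ)) :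
    (ClassAt A w D (i + 1) ∧ DescFirst A w gl (gl U) D) ↔
    (ClassAt A w D (i + 1) ∧ ∃ W, LRrel A w gl i U W ∧ childC A w W D) := by
  constructor
  · rintro ⟨hD, Fm, j, hFirst, hdesc⟩
    refine ⟨hD, ?_⟩
    have hji : j ≤ i := by
      by_contra hlt
      push_neg at hlt
      exact hFirst.2.2 U i hU rfl (Or.inl hlt)
    rcases Relation.ReflTransGen.cases_tail hdesc with hEq | ⟨W, hW, hchild⟩
    · exfalso
      have : i + 1 = j := classAt_unique A w hD (hEq ▸ hFirst.1)
      omega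
    · obtain ⟨k, hWk, hDk⟩ := childC_levels A w hchild
      have hk : k + 1 = i + 1 := classAt_unique A w hDk hD
      have hk' : k = i := by omega
      exact ⟨W, ⟨hU, hk' ▸ hWk, Fm, j, hFirst, hW⟩, hchild⟩
  · rintro ⟨hD, W, ⟨_, hWi, Fm, j, hFirst, hdescW⟩, hchild⟩
    exact ⟨hD, Fm, j, hFirst, hdescW.tail hchild⟩

/-- Lemma: `lmd(gl(U), i+1) = lsf_i(U)`. -/
theorem lmd_eq_lsf [Fintype Alph] [Fintype Q]
    (A : NBW Alph Q) (w : ℕ → Alph) (gl : Set (Q × ℕ) → ℕ) (hgl : GlSpec A w gl)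
    (i : ℕ) (U : Set (Q × ℕ)) (hU : ClassAt A w U i) :
    ∀ C, IsLmd A w gl (gl U) (i + 1) C ↔ IsLsf A w gl i U C := by
  intro C
  constructor
  · rintro ⟨hC, hDesc, hmin⟩
    refine ⟨⟨hC, ((key_set_eq A w gl i U hU C).mp ⟨hC, hDesc⟩).2⟩, ?_⟩
    intro D hD
    exact hmin D hD.1 ((key_set_eq A w gl i U hU D).mpr hD).2
  · rintro ⟨⟨hC, hW⟩, hmin⟩
    refine ⟨hC, ((key_set_eq A w gl i U hU C).mpr ⟨hC, hW⟩).2, ?_⟩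
    intro D hD hDesc
    exact hmin D ((key_set_eq A w gl i U hU D).mp ⟨hD, hDesc⟩)
end
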